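/- arXiv:2102.10300 — 16 statements merged into one kernel-verified Lean document; each statement's English description precedes it below -/
import Mathlib

section
/- Let R be a commutative ring, M an R-module, and N a proper submodule of M. The following are equivalent: (1) N is a quasi J-submodule of M; (2) for every r ∈ R with r ∉ (J(R)M : M) and every submodule K of M with rK ⊆ N, one has K ⊆ M-rad(N); (3) for every ideal A of R with A ⊄ (J(R)M : M) and every submodule K of M with AK ⊆ N, one has K ⊆ M-rad(N). -/
open Submodule Pointwise

/-- The ideal `(J(R)M : M)` where `J(R)` is the Jacobson radical of `R`. -/
def jacobsonColon (R M : Type*) [CommRing R] [AddCommGroup M] [Module R M] : Ideal R :=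
  ((⊥ : Ideal R).jacobson • (⊤ : Submodule R M)).colon ⊤

/-- A prime submodule: a proper submodule `N` such that whenever `r • m ∈ N`,
either `m ∈ N` or `r • M ⊆ N`. -/
def IsPrimeSubmodule {R M : Type*} [CommRing R] [AddCommGroup M] [Module R M]
    (N : Submodule R M) : Prop :=
  N ≠ ⊤ ∧ ∀ (r : R) (m : M), r • m ∈ N → m ∈ N ∨ r ∈ N.colon ⊤

/-- `M`-rad(N): the intersection of all prime submodules of `M` containing `N`
(equal to `⊤` if there are none). -/
def Mrad {R M : Type*} [CommRing R] [AddCommGroup M] [Module R M]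
    (N : Submodule R M) : Submodule R M :=
  sInf {P : Submodule R M | IsPrimeSubmodule P ∧ N ≤ P}

/-- A quasi `J`-submodule. -/
def IsQuasiJSubmodule {R M : Type*} [CommRing R] [AddCommGroup M] [Module R M]
    (N : Submodule R M) : Prop :=
  N ≠ ⊤ ∧ ∀ (r : R) (m : M), r • m ∈ N → r ∉ jacobsonColon R M → m ∈ Mrad N

theorem stmt0 {R M : Type*} [CommRing R] [AddCommGroup M] [Module R M]
    (N : Submodule R M) (hN : N ≠ ⊤) :
    List.TFAE [IsQuasiJSubmodule N,
      ∀ r : R, r ∉ jacobsonColon R M → ∀ K : Submodule R M,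
        (∀ k ∈ K, r • k ∈ N) → K ≤ Mrad N,
      ∀ A : Ideal R, ¬ A ≤ jacobsonColon R M → ∀ K : Submodule R M,
        (∀ a ∈ A, ∀ k ∈ K, a • k ∈ N) → K ≤ Mrad N] := by
  tfae_have 1 → 2 := by
    rintro ⟨-, h⟩ r hr K hK k hk
    exact h r k (hK k hk) hr
  tfae_have 2 → 3 := by
    intro h A hA K hK
    obtain ⟨a, haA, ha⟩ := SetLike.not_le_iff_exists.mp hA
    exact h a ha K (fun k hk => hK a haA k hk)
  tfae_have 3 → 1 := by
    intro h
    refine ⟨hN, fun r m hrm hr => ?_⟩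
    have hA : ¬ Ideal.span {r} ≤ jacobsonColon R M := fun hle =>
      hr (hle (Ideal.subset_span rfl))
    refine h (Ideal.span {r}) hA (Submodule.span R {m}) ?_
      (Submodule.subset_span rfl)
    intro a ha k hk
    obtain ⟨c, rfl⟩ := Ideal.mem_span_singleton'.mp ha
    obtain ⟨d, rfl⟩ := Submodule.mem_span_singleton.mp hk
    have : (c * r) • d • m = (c * d) • (r • m) := by
      rw [smul_smul, smul_smul]; ring_nf
    rw [this]
    exact N.smul_mem _ hrm
  tfae_finish
end

section
/- Let φ : M₁ → M₂ be a surjective homomorphism of R-modules. If N is a quasi J-submodule of M₁ with ker(φ) ⊆ N, then φ(N) is a quasi J-submodule of M₂. -/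
open Submodule Pointwise

theorem stmt1 {R M₁ M₂ : Type*} [CommRing R] [AddCommGroup M₁] [Module R M₁]
    [AddCommGroup M₂] [Module R M₂] (φ : M₁ →ₗ[R] M₂) (hφ : Function.Surjective φ)
    (N : Submodule R M₁) (hN : IsQuasiJSubmodule N) (hker : LinearMap.ker φ ≤ N) :
    IsQuasiJSubmodule (N.map φ) := by
  obtain ⟨hNne, hNqj⟩ := hN
  have hcomap : (N.map φ).comap φ = N := by
    rw [Submodule.comap_map_eq, sup_eq_left.mpr hker]
  constructor
  · intro h
    apply hNne
    rw [← hcomap, h, Submodule.comap_top]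
  · intro r m hrm hrJ
    obtain ⟨m₁, rfl⟩ := hφ m
    have hrm₁ : r • m₁ ∈ N := by
      rw [← hcomap]
      simpa [Submodule.mem_comap] using hrm
    have hrJ1 : r ∉ jacobsonColon R M₁ := by
      intro hr
      apply hrJ
      rw [jacobsonColon, Submodule.mem_colon] at hr ⊢
      intro p _
      obtain ⟨p₁, rfl⟩ := hφ p
      have h1 := hr p₁ (by simp)
      have h2 : φ (r • p₁) ∈ Submodule.map φ ((⊥ : Ideal R).jacobson • ⊤) :=
        Submodule.mem_map_of_mem h1
      rw [Submodule.map_smul''] at h2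
      simpa [Submodule.map_top, LinearMap.range_eq_top.mpr hφ] using h2
    have hm₁ := hNqj r m₁ hrm₁ hrJ1
    rw [Mrad, Submodule.mem_sInf] at hm₁ ⊢
    rintro P ⟨hP, hNP⟩
    refine hm₁ (P.comap φ) ⟨⟨?_, ?_⟩, ?_⟩
    · intro h
      apply hP.1
      rw [eq_top_iff]
      rintro x -
      obtain ⟨x₁, rfl⟩ := hφ x
      have : x₁ ∈ P.comap φ := h ▸ Submodule.mem_top
      exact this
    · intro s x hsx
      obtain h | h := hP.2 s (φ x) (by simpa using hsx)
      · exact Or.inl h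
      · right
        rw [Submodule.mem_colon] at h ⊢
        intro p _
        simpa using h (φ p) (by simp)
    · intro x hx
      exact hNP (Submodule.mem_map_of_mem hx)
end

section
/- Let φ : M₁ → M₂ be a surjective homomorphism of R-modules. If K is a quasi J-submodule of M₂ and ker(φ) ⊆ J(R)M₁, then φ⁻¹(K) is a quasi J-submodule of M₁. -/
open Submodule Pointwise

theorem stmt2 {R M₁ M₂ : Type*} [CommRing R] [AddCommGroup M₁] [Module R M₁]
    [AddCommGroup M₂] [Module R M₂] (φ : M₁ →ₗ[R] M₂) (hφ : Function.Surjective φ)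
    (K : Submodule R M₂) (hK : IsQuasiJSubmodule K)
    (hker : LinearMap.ker φ ≤ (⊥ : Ideal R).jacobson • (⊤ : Submodule R M₁)) :
    IsQuasiJSubmodule (K.comap φ) := by
  obtain ⟨hKne, hKq⟩ := hK
  have hmaptop : (⊥ : Ideal R).jacobson • (⊤ : Submodule R M₂) =
      Submodule.map φ ((⊥ : Ideal R).jacobson • (⊤ : Submodule R M₁)) := by
    rw [Submodule.map_smul'', Submodule.map_top, LinearMap.range_eq_top.mpr hφ]
  constructor
  · intro h
    apply hKne
    rw [eq_top_iff]
    intro x _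
    obtain ⟨y, rfl⟩ := hφ x
    have : y ∈ K.comap φ := h ▸ Submodule.mem_top
    exact this
  · intro r m hrm hr
    have hr2 : r ∉ jacobsonColon R M₂ := by
      intro hr2
      apply hr
      rw [jacobsonColon, Submodule.mem_colon] at hr2 ⊢
      intro m' _
      have h1 : r • φ m' ∈ (⊥ : Ideal R).jacobson • (⊤ : Submodule R M₂) :=
        hr2 (φ m') (Submodule.mem_top (R := R))
      rw [hmaptop] at h1
      obtain ⟨x, hx, hxe⟩ := h1
      have hkermem : r • m' - x ∈ LinearMap.ker φ := by
        rw [LinearMap.mem_ker, map_sub, map_smul, hxe, sub_self]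
      have := Submodule.add_mem _ (hker hkermem) hx
      simpa using this
    have hφm : φ m ∈ Mrad K := hKq r (φ m) (by rw [← map_smul]; exact hrm) hr2
    rw [Mrad, Submodule.mem_sInf]
    rintro P ⟨⟨hPne, hPp⟩, hKP⟩
    have hkerP : LinearMap.ker φ ≤ P := by
      intro x hx
      exact hKP (by simp [Submodule.mem_comap, LinearMap.mem_ker.mp hx])
    have hcm : Submodule.comap φ (Submodule.map φ P) = P := by
      rw [Submodule.comap_map_eq, sup_eq_left.mpr hkerP]
    have hprime : IsPrimeSubmodule (P.map φ) := by
      constructor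
      · intro h
        apply hPne
        rw [eq_top_iff]
        intro x _
        have : x ∈ Submodule.comap φ (Submodule.map φ P) := by
          rw [h]; exact Submodule.mem_top
        rwa [hcm] at this
      · intro s y hsy
        obtain ⟨m', rfl⟩ := hφ y
        have : s • m' ∈ P := by
          have : s • m' ∈ Submodule.comap φ (Submodule.map φ P) := by
            rw [Submodule.mem_comap, map_smul]; exact hsy
          rwa [hcm] at this
        rcases hPp s m' this with h | h
        · exact Or.inl ⟨m', h, rfl⟩
        · right
          rw [Submodule.mem_colon] at h ⊢
          intro p _
          obtain ⟨q, rfl⟩ := hφ p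
          exact ⟨s • q, h q (Submodule.mem_top (R := R)), by rw [map_smul]⟩
    have hKle : K ≤ Submodule.map φ P := by
      intro k hk
      obtain ⟨q, rfl⟩ := hφ k
      exact ⟨q, hKP hk, rfl⟩
    have : φ m ∈ Submodule.map φ P := by
      rw [Mrad, Submodule.mem_sInf] at hφm
      exact hφm _ ⟨hprime, hKle⟩
    have : m ∈ Submodule.comap φ (Submodule.map φ P) := this
    rwa [hcm] at this
end

section
/- Let N and L be submodules of an R-module M with L ⊆ N. If N is a quasi J-submodule of M, then N/L is a quasi J-submodule of the quotient module M/L. -/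
open Submodule Pointwise

theorem stmt3 {R M : Type*} [CommRing R] [AddCommGroup M] [Module R M]
    (N L : Submodule R M) (hLN : L ≤ N) (hN : IsQuasiJSubmodule N) :
    IsQuasiJSubmodule (N.map L.mkQ) := by

  obtain ⟨hNne, hNq⟩ := hN
  have hsurj : Function.Surjective L.mkQ := L.mkQ_surjective
  have hcm : comap L.mkQ (map L.mkQ N) = N := by
    rw [Submodule.comap_map_eq, L.ker_mkQ, sup_eq_left.mpr hLN]
  constructor
  · intro h
    apply hNne
    have := congrArg (comap L.mkQ) h
    rw [hcm, Submodule.comap_top] at this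
    exact this
  · intro r mbar hrm hrj
    obtain ⟨m, rfl⟩ := hsurj mbar
    have hrmN : r • m ∈ N := by
      have h1 : L.mkQ (r • m) ∈ map L.mkQ N := by rw [map_smul]; exact hrm
      rw [← hcm]; exact h1
    have hrjM : r ∉ jacobsonColon R M := by
      intro hr
      apply hrj
      rw [jacobsonColon, Submodule.mem_colon] at hr ⊢
      intro p _
      obtain ⟨x, rfl⟩ := hsurj p
      have : r • x ∈ (⊥ : Ideal R).jacobson • (⊤ : Submodule R M) :=
        hr x trivial
      have : L.mkQ (r • x) ∈ map L.mkQ ((⊥ : Ideal R).jacobson • (⊤ : Submodule R M)) :=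
        Submodule.mem_map_of_mem this
      rw [Submodule.map_smul''] at this
      simpa using Submodule.smul_mono le_rfl le_top this
    have hm : m ∈ Mrad N := hNq r m hrmN hrjM
    -- show mkQ m ∈ Mrad (map mkQ N)
    rw [Mrad, Submodule.mem_sInf]
    rintro P ⟨⟨hPne, hPp⟩, hNP⟩
    have hPprime : IsPrimeSubmodule (comap L.mkQ P) := by
      constructor
      · intro h
        apply hPne
        have := congrArg (map L.mkQ) h
        rwa [Submodule.map_comap_eq_of_surjective hsurj, Submodule.map_top,
          L.range_mkQ] at this
      · intro s x hsx
        have : s • L.mkQ x ∈ P := by simpa using hsx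
        rcases hPp s (L.mkQ x) this with h | h
        · exact Or.inl h
        · right
          rw [Submodule.mem_colon] at h ⊢
          intro p _
          exact h (L.mkQ p) trivial
    have hmP : m ∈ comap L.mkQ P := by
      rw [Mrad, Submodule.mem_sInf] at hm
      exact hm _ ⟨hPprime, fun x hx => hNP (Submodule.mem_map_of_mem hx)⟩
    exact hmP
end

section
/- Let M₁, M₂, ..., M_k be R-modules, M = M₁ × M₂ × ⋯ × M_k, and let N = N₁ × N₂ × ⋯ × N_k be a quasi J-submodule of M, where each Nᵢ is a submodule of Mᵢ. Then for every index i with Nᵢ ≠ Mᵢ, the submodule Nᵢ is a quasi J-submodule of Mᵢ. -/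
open Submodule Pointwise

theorem stmt4 {R : Type*} [CommRing R] {k : ℕ} {M : Fin k → Type*}
    [∀ i, AddCommGroup (M i)] [∀ i, Module R (M i)]
    (N : ∀ i, Submodule R (M i))
    (hN : IsQuasiJSubmodule (Submodule.pi Set.univ N)) :
    ∀ i, N i ≠ ⊤ → IsQuasiJSubmodule (N i) := by
  intro i hNi
  refine ⟨hNi, fun r m hrm hr => ?_⟩
  -- Step 1: r ∉ jacobsonColon on the product
  have hr' : r ∉ jacobsonColon R (∀ j, M j) := by
    intro h
    apply hr
    rw [jacobsonColon, Submodule.mem_colon] at h ⊢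
    intro x _
    have hx := h (Pi.single i x) (Submodule.mem_top (R := R))
    have hmap : (LinearMap.proj i : (∀ j, M j) →ₗ[R] M i) (r • Pi.single i x) ∈
        Submodule.map (LinearMap.proj i : (∀ j, M j) →ₗ[R] M i)
          ((⊥ : Ideal R).jacobson • (⊤ : Submodule R (∀ j, M j))) :=
      Submodule.mem_map_of_mem hx
    rw [Submodule.map_smul''] at hmap
    simp only [LinearMap.map_smul, LinearMap.proj_apply, Pi.single_eq_same] at hmap
    exact (smul_mono_right _ (le_top : _ ≤ (⊤ : Submodule R (M i)))) hmap
  -- Step 2: r • single i m ∈ pi N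
  have hm : r • Pi.single i m ∈ Submodule.pi Set.univ N := by
    intro j _
    rcases eq_or_ne j i with rfl | hne
    · simpa using hrm
    · simp [Pi.single_eq_of_ne hne]
  have hmem := hN.2 r (Pi.single i m) hm hr'
  -- Step 3: project down
  rw [Mrad, Submodule.mem_sInf]
  intro P hP
  obtain ⟨hPrime, hNP⟩ := hP
  set Q : Submodule R (∀ j, M j) :=
    P.comap (LinearMap.proj i : (∀ j, M j) →ₗ[R] M i) with hQ
  have hQprime : IsPrimeSubmodule Q := by
    constructor
    · intro htop
      apply hPrime.1
      rw [eq_top_iff]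
      intro x _
      have : Pi.single i x ∈ Q := htop ▸ Submodule.mem_top
      simpa [hQ] using this
    · intro r' m' h
      rcases hPrime.2 r' (m' i) (by simpa [hQ] using h) with h1 | h2
      · exact Or.inl h1
      · right
        rw [Submodule.mem_colon]
        intro x _
        simp only [hQ, Submodule.mem_comap, LinearMap.map_smul, LinearMap.proj_apply]
        exact Submodule.mem_colon.mp h2 (x i) (Submodule.mem_top (R := R))
  have hNQ : Submodule.pi Set.univ N ≤ Q := fun x hx =>
    hNP (hx i (Set.mem_univ i))
  have := (Submodule.mem_sInf.mp hmem) Q ⟨hQprime, hNQ⟩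
  simpa [hQ] using this
end

section
/- Let S be a multiplicatively closed subset of a commutative ring R such that S⁻¹(J(R)) = J(S⁻¹R), and let M be an R-module. If N is a quasi J-submodule of M and S⁻¹N ≠ S⁻¹M, then S⁻¹N is a quasi J-submodule of the S⁻¹R-module S⁻¹M. -/
open Submodule Pointwise

section Aux

variable {R M : Type*} [CommRing R] [AddCommGroup M] [Module R M] (S : Submonoid R)

local notation "L" => Localization S
local notation "ML" => LocalizedModule S M
local notation "f" => LocalizedModule.mkLinearMap S M

/-- Image of `J(R)•M` in the localization lands in `J(L)•S⁻¹M`. -/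
lemma aux_jac_smul
    (hJ : ((⊥ : Ideal R).jacobson).map (algebraMap R (Localization S)) =
      (⊥ : Ideal (Localization S)).jacobson)
    {n : M} (hn : n ∈ ((⊥ : Ideal R).jacobson • (⊤ : Submodule R M))) (u : S) :
    IsLocalizedModule.mk' f n u ∈
      ((⊥ : Ideal L).jacobson • (⊤ : Submodule L ML)) := by
  have hfn : f n ∈ ((⊥ : Ideal L).jacobson • (⊤ : Submodule L ML)) := by
    refine Submodule.smul_induction_on hn (fun a ha m _ ↦ ?_) (fun x y hx hy ↦ by
      rw [map_add]; exact add_mem hx hy)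
    rw [map_smul, ← algebraMap_smul (Localization S) a (f m)]
    exact Submodule.smul_mem_smul (hJ ▸ Ideal.mem_map_of_mem _ ha) trivial
  have : IsLocalizedModule.mk' f n u
      = IsLocalization.mk' L (1 : R) u • IsLocalizedModule.mk' f n (1 : S) := by
    rw [IsLocalizedModule.mk'_smul_mk', one_smul, mul_one]
  rw [this, IsLocalizedModule.mk'_one]
  exact Submodule.smul_mem _ _ hfn

/-- Contraction of a prime submodule of the localization is prime and pulls back `Mrad`. -/
lemma aux_mem_Mrad_localized (N : Submodule R M) {m : M} (hm : m ∈ Mrad N) (t : S) :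
    IsLocalizedModule.mk' f m t ∈ Mrad (N.localized S) := by
  rw [Mrad, Submodule.mem_sInf]
  rintro P ⟨hP, hNP⟩
  set Q : Submodule R M := (P.restrictScalars R).comap f with hQdef
  have hmk : ∀ (p : M) (q : S), p ∈ Q → IsLocalizedModule.mk' f p q ∈ P := by
    intro p q hp
    have : IsLocalizedModule.mk' f p q
        = IsLocalization.mk' L (1 : R) q • IsLocalizedModule.mk' f p (1 : S) := by
      rw [IsLocalizedModule.mk'_smul_mk', one_smul, mul_one]
    rw [this, IsLocalizedModule.mk'_one]
    exact Submodule.smul_mem _ _ hp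
  have hQtop : Q ≠ ⊤ := by
    intro h
    apply hP.1
    rw [eq_top_iff]
    rintro z -
    obtain ⟨⟨p, q⟩, rfl⟩ := IsLocalizedModule.mk'_surjective S f z
    exact hmk p q (h ▸ trivial)
  have hQprime : IsPrimeSubmodule Q := by
    refine ⟨hQtop, fun a b hab ↦ ?_⟩
    have hab' : (algebraMap R L a) • f b ∈ P := by
      have : f (a • b) = (algebraMap R L a) • f b := by
        rw [map_smul, algebraMap_smul]
      exact this ▸ hab
    rcases hP.2 _ _ hab' with h | h
    · exact Or.inl h
    · refine Or.inr (Submodule.mem_colon.2 fun p _ ↦ ?_)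
      show f (a • p) ∈ P
      rw [map_smul, ← algebraMap_smul (Localization S) a (f p)]
      exact Submodule.mem_colon.1 h (f p) trivial
  have hNQ : N ≤ Q := by
    intro n hn
    have : IsLocalizedModule.mk' f n (1 : S) ∈ N.localized S := ⟨n, hn, 1, rfl⟩
    have := hNP this
    rwa [IsLocalizedModule.mk'_one] at this
  have hmQ : m ∈ Q := by
    rw [Mrad, Submodule.mem_sInf] at hm
    exact hm Q ⟨hQprime, hNQ⟩
  exact hmk m t hmQ

end Aux

theorem stmt6 {R M : Type*} [CommRing R] [AddCommGroup M] [Module R M]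
    (S : Submonoid R)
    (hJ : ((⊥ : Ideal R).jacobson).map (algebraMap R (Localization S)) =
      (⊥ : Ideal (Localization S)).jacobson)
    (N : Submodule R M) (hN : IsQuasiJSubmodule N)
    (hproper : N.localized S ≠ ⊤) :
    IsQuasiJSubmodule (N.localized S) := by
  set L := Localization S
  set f := LocalizedModule.mkLinearMap S M with hf
  refine ⟨hproper, fun x y hxy hxJ ↦ ?_⟩
  obtain ⟨⟨r, s⟩, rfl⟩ := IsLocalization.mk'_surjective S x
  obtain ⟨⟨m, t⟩, rfl⟩ := IsLocalizedModule.mk'_surjective S f y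
  simp only [Function.uncurry_apply_pair] at hxy hxJ ⊢
  rw [IsLocalizedModule.mk'_smul_mk'] at hxy
  obtain ⟨n, hn, u, hu⟩ := hxy
  rw [IsLocalizedModule.mk'_eq_mk'_iff] at hu
  obtain ⟨c, hc⟩ := hu
  -- hc : c • u • (r • m) = c • (s * t) • n
  have hcn : ((c * u : S) : R) • r • m ∈ N := by
    rw [Submonoid.coe_mul, mul_smul]
    simp only [Submonoid.smul_def] at hc
    rw [hc]
    exact N.smul_mem _ (N.smul_mem _ hn)
  have hmem : (((c * u : S) : R) * r) • m ∈ N := by rwa [mul_smul]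
  by_cases hcase : (((c * u : S) : R) * r) ∈ jacobsonColon R M
  · -- then x ∈ jacobsonColon L ML, contradiction
    exfalso
    apply hxJ
    rw [jacobsonColon]
    refine Submodule.mem_colon.2 fun z _ ↦ ?_
    obtain ⟨⟨p, q⟩, rfl⟩ := IsLocalizedModule.mk'_surjective S f z
    simp only [Function.uncurry_apply_pair]
    rw [IsLocalizedModule.mk'_smul_mk']
    have : IsLocalizedModule.mk' f (r • p) (s * q)
        = IsLocalizedModule.mk' f ((c * u : S) • (r • p)) ((c * u) * (s * q)) := by
      rw [IsLocalizedModule.mk'_cancel_left]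
    rw [this]
    have hin : ((c * u : S) : R) • r • p ∈ ((⊥ : Ideal R).jacobson • (⊤ : Submodule R M)) := by
      have := Submodule.mem_colon.1 hcase p trivial
      rwa [mul_smul] at this
    exact aux_jac_smul S hJ hin _
  · exact aux_mem_Mrad_localized S N (hN.2 _ _ hmem hcase) t
end

section
/- Let N be a quasi-primary submodule of an R-module M such that (N : M) ⊆ J(R). Then N is a quasi J-submodule of M. -/
open Submodule Pointwise

theorem stmt8 {R M : Type*} [CommRing R] [AddCommGroup M] [Module R M]
    (N : Submodule R M) (hN : N ≠ ⊤)
    (hqp : ∀ (r : R) (m : M), r • m ∈ N → r ∈ (N.colon ⊤).radical ∨ m ∈ Mrad N)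
    (hJ : N.colon ⊤ ≤ (⊥ : Ideal R).jacobson) :
    IsQuasiJSubmodule N := by
  refine ⟨hN, fun r m hrm hr => ?_⟩
  rcases hqp r m hrm with h | h
  · exfalso
    apply hr
    have hrJ : r ∈ (⊥ : Ideal R).jacobson := by
      have h1 : r ∈ (N.colon ⊤).jacobson := Ideal.radical_le_jacobson h
      have h2 : (N.colon ⊤).jacobson ≤ ((⊥ : Ideal R).jacobson).jacobson :=
        Ideal.jacobson_mono hJ
      rw [Ideal.jacobson_idem] at h2
      exact h2 h1
    rw [jacobsonColon, Submodule.mem_colon]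
    intro x _
    exact Submodule.smul_mem_smul hrJ (Submodule.mem_top)
  · exact h
end

section
/- Let M be an R-module such that J(R) = (J(R)M : M) and J(R) is a quasi J-ideal of R. Let N, N₁, N₂, ..., N_k be submodules of M with N ⊆ N₁ ∪ N₂ ∪ ⋯ ∪ N_k. Suppose that N_j is a quasi J-submodule of M and that (Nᵢ : M) ⊄ J(R) for every i ≠ j. If N ⊄ ⋃_{i ≠ j} Nᵢ, then N ⊆ M-rad(N_j). -/
open Submodule Pointwise

/-- A `J`-ideal of a commutative ring. -/
def IsJIdeal {R : Type*} [CommRing R] (I : Ideal R) : Prop :=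
  I ≠ ⊤ ∧ ∀ a b : R, a * b ∈ I → a ∉ (⊥ : Ideal R).jacobson → b ∈ I

/-- A quasi `J`-ideal: a proper ideal whose radical is a `J`-ideal. -/
def IsQuasiJIdeal {R : Type*} [CommRing R] (I : Ideal R) : Prop :=
  I ≠ ⊤ ∧ IsJIdeal I.radical

theorem stmt10 {R M : Type*} [CommRing R] [AddCommGroup M] [Module R M]
    (hJ : (⊥ : Ideal R).jacobson = jacobsonColon R M)
    (hJq : IsQuasiJIdeal ((⊥ : Ideal R).jacobson))
    {k : ℕ} (N : Submodule R M) (N' : Fin k → Submodule R M) (j : Fin k)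
    (hsub : (N : Set M) ⊆ ⋃ i, (N' i : Set M))
    (hj : IsQuasiJSubmodule (N' j))
    (hcolon : ∀ i, i ≠ j → ¬ (N' i).colon ⊤ ≤ (⊥ : Ideal R).jacobson)
    (hnot : ¬ (N : Set M) ⊆ ⋃ i, ⋃ (_ : i ≠ j), (N' i : Set M)) :
    N ≤ Mrad (N' j) := by
  classical
  set J := (⊥ : Ideal R).jacobson with hJdef
  have hJne : J ≠ ⊤ := hJq.1
  have hone : (1 : R) ∉ J := fun h => hJne (Ideal.eq_top_iff_one J |>.mpr h)
  -- product of two elements not in J is not in J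
  have hmul : ∀ a b : R, a ∉ J → b ∉ J → a * b ∉ J := by
    intro a b ha hb hab
    have h1 : b ∈ J.radical := hJq.2.2 a b (Ideal.le_radical hab) ha
    have h2 : (1 : R) ∈ J.radical := hJq.2.2 b 1 (by simpa using h1) hb
    exact hJq.2.1 (Ideal.eq_top_iff_one J.radical |>.mpr h2)
  -- choose the elements r_i
  have hchoice : ∀ i : Fin k, ∃ a : R, a ∉ J ∧ (i ≠ j → a ∈ (N' i).colon ⊤) := by
    intro i
    by_cases hij : i = j
    · exact ⟨1, hone, fun h => absurd hij h⟩
    · obtain ⟨a, haI, haJ⟩ := SetLike.not_le_iff_exists.mp (hcolon i hij)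
      exact ⟨a, haJ, fun _ => haI⟩
  choose f hf1 hf2 using hchoice
  set r : R := ∏ i, f i with hrdef
  have hrJ : r ∉ J := by
    refine Finset.prod_induction f (fun x => x ∉ J) (fun a b => hmul a b) hone ?_
    intro i _; exact hf1 i
  have hrcolon : ∀ i : Fin k, i ≠ j → ∀ m : M, r • m ∈ N' i := by
    intro i hij m
    have hr : r ∈ (N' i).colon ⊤ := by
      rw [hrdef, ← Finset.prod_erase_mul _ _ (Finset.mem_univ i)]
      exact Ideal.mul_mem_left _ _ (hf2 i hij)
    exact Submodule.mem_colon.mp hr m trivial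
  -- the element x
  obtain ⟨x, hxN, hxU⟩ := Set.not_subset.mp hnot
  have hxnot : ∀ i : Fin k, i ≠ j → x ∉ N' i := by
    intro i hij hx
    exact hxU (Set.mem_iUnion.mpr ⟨i, Set.mem_iUnion.mpr ⟨hij, hx⟩⟩)
  have hxj : x ∈ N' j := by
    obtain ⟨_, ⟨i, rfl⟩, hx⟩ := hsub hxN
    by_cases hij : i = j
    · exact hij ▸ hx
    · exact absurd hx (hxnot i hij)
  -- Nj ≤ Mrad Nj
  have hle : N' j ≤ Mrad (N' j) := le_sInf fun P hP => hP.2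
  -- main argument
  intro n hn
  have hyN : r • n + x ∈ N := N.add_mem (N.smul_mem r hn) hxN
  obtain ⟨_, ⟨i, rfl⟩, hy⟩ := hsub hyN
  by_cases hij : i = j
  · subst hij
    have hrn : r • n ∈ N' i := by
      have := (N' i).sub_mem hy hxj
      simpa using this
    rcases Classical.em (n ∈ Mrad (N' i)) with h | h
    · exact h
    · exact hj.2 r n hrn (fun hc => hrJ (hJ ▸ hc))
  · exfalso
    have hrn : r • n ∈ N' i := hrcolon i hij n
    have : x ∈ N' i := by
      have := (N' i).sub_mem hy hrn
      simpa using this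
    exact hxnot i hij this
end

section
/- Let N be a submodule of an R-module M with N ⊆ J(R)M. Then N is a quasi J-submodule of M if and only if M/N is a non-zero quasi J-presimplifiable R-module, and N is a J-submodule of M if and only if M/N is a non-zero J-presimplifiable R-module. -/
open Submodule Pointwise

/-- A `J`-submodule. -/
def IsJSubmodule {R M : Type*} [CommRing R] [AddCommGroup M] [Module R M]
    (N : Submodule R M) : Prop :=
  N ≠ ⊤ ∧ ∀ (r : R) (m : M), r • m ∈ N → r ∉ jacobsonColon R M → m ∈ N

/-- `Z(M)`: the set of zero divisors on `M`. -/
def Zdiv (R M : Type*) [CommRing R] [AddCommGroup M] [Module R M] : Set R :=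
  {r : R | ∃ m : M, m ≠ 0 ∧ r • m = 0}

/-- `NZ(M) = {r ∈ R : r m = 0 for some m ∉ Nil(M)}` where `Nil(M) = M`-rad(0). -/
def NZdiv (R M : Type*) [CommRing R] [AddCommGroup M] [Module R M] : Set R :=
  {r : R | ∃ m : M, m ∉ Mrad (⊥ : Submodule R M) ∧ r • m = 0}

/-- `M` is `J`-presimplifiable if `Z(M) ⊆ (J(R)M : M)`. -/
def IsJPresimplifiable (R M : Type*) [CommRing R] [AddCommGroup M] [Module R M] : Prop :=
  Zdiv R M ⊆ (jacobsonColon R M : Set R)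

/-- `M` is quasi `J`-presimplifiable if `NZ(M) ⊆ (J(R)M : M)`. -/
def IsQuasiJPresimplifiable (R M : Type*) [CommRing R] [AddCommGroup M] [Module R M] : Prop :=
  NZdiv R M ⊆ (jacobsonColon R M : Set R)


section Aux

variable {R M : Type*} [CommRing R] [AddCommGroup M] [Module R M] (N : Submodule R M)

lemma jac_colon_quot (hNJ : N ≤ (⊥ : Ideal R).jacobson • (⊤ : Submodule R M)) (r : R) :
    r ∈ jacobsonColon R (M ⧸ N) ↔ r ∈ jacobsonColon R M := by
  have hmap : ((⊥ : Ideal R).jacobson • (⊤ : Submodule R (M ⧸ N)))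
      = Submodule.map N.mkQ ((⊥ : Ideal R).jacobson • (⊤ : Submodule R M)) := by
    rw [Submodule.map_smul'', Submodule.map_top, Submodule.range_mkQ]
  constructor
  · intro h
    rw [jacobsonColon, Submodule.mem_colon] at h ⊢
    intro m _
    have := h (N.mkQ m) trivial
    rw [hmap] at this
    obtain ⟨x, hx, hxe⟩ := this
    have hxe' : N.mkQ x = N.mkQ (r • m) := by simpa using hxe
    have : r • m - x ∈ N := neg_mem_iff.mp (by simpa using (Submodule.Quotient.eq N).mp hxe')
    have : r • m = (r • m - x) + x := by abel
    rw [this]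
    exact Submodule.add_mem _ (hNJ ‹r • m - x ∈ N›) hx
  · intro h
    rw [jacobsonColon, Submodule.mem_colon] at h ⊢
    intro p _
    obtain ⟨m, rfl⟩ := N.mkQ_surjective p
    rw [hmap]
    exact ⟨r • m, h m trivial, by simp⟩

lemma mrad_quot (m : M) :
    N.mkQ m ∈ Mrad (⊥ : Submodule R (M ⧸ N)) ↔ m ∈ Mrad N := by
  constructor
  · intro h
    rw [Mrad, Submodule.mem_sInf]
    rintro P ⟨⟨hPt, hPp⟩, hNP⟩
    rw [Mrad, Submodule.mem_sInf] at h
    have hprime : IsPrimeSubmodule (Submodule.map N.mkQ P) := by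
      constructor
      · intro htop
        apply hPt
        have : Submodule.comap N.mkQ (Submodule.map N.mkQ P) = ⊤ := by
          rw [htop]; simp
        rw [Submodule.comap_map_mkQ, sup_of_le_right hNP] at this
        exact this
      · rintro r x hx
        obtain ⟨y, rfl⟩ := N.mkQ_surjective x
        obtain ⟨p, hp, hpe⟩ := hx
        have hry : r • y ∈ P := by
          have hpe' : N.mkQ p = N.mkQ (r • y) := by simpa using hpe
          have : p - r • y ∈ N := (Submodule.Quotient.eq N).mp hpe' 
          have h2 : r • y = p - (p - r • y) := by abel
          rw [h2]
          exact Submodule.sub_mem _ hp (hNP this)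
        rcases hPp r y hry with hy | hr
        · exact Or.inl ⟨y, hy, rfl⟩
        · refine Or.inr ?_
          rw [Submodule.mem_colon] at hr ⊢
          intro q _
          obtain ⟨z, rfl⟩ := N.mkQ_surjective q
          exact ⟨r • z, hr z trivial, by simp⟩
    have := h _ ⟨hprime, bot_le⟩
    obtain ⟨p, hp, hpe⟩ := this
    have hpe' : N.mkQ p = N.mkQ m := hpe
    have : p - m ∈ N := (Submodule.Quotient.eq N).mp hpe' 
    have h2 : m = p - (p - m) := by abel
    rw [h2]
    exact Submodule.sub_mem _ hp (hNP this)
  · intro h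
    rw [Mrad, Submodule.mem_sInf]
    rintro Q ⟨⟨hQt, hQp⟩, _⟩
    rw [Mrad, Submodule.mem_sInf] at h
    have hprime : IsPrimeSubmodule (Submodule.comap N.mkQ Q) := by
      constructor
      · intro htop
        apply hQt
        rw [eq_top_iff]
        intro q _
        obtain ⟨z, rfl⟩ := N.mkQ_surjective q
        have : z ∈ Submodule.comap N.mkQ Q := htop ▸ trivial
        exact this
      · intro r x hx
        rcases hQp r (N.mkQ x) (by simpa using hx) with hy | hr
        · exact Or.inl hy
        · refine Or.inr ?_
          rw [Submodule.mem_colon] at hr ⊢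
          intro q _
          exact hr (N.mkQ q) trivial
    have hN : N ≤ Submodule.comap N.mkQ Q := by
      intro n hn
      have h0 : N.mkQ n = 0 := (Submodule.Quotient.mk_eq_zero N).mpr hn
      show N.mkQ n ∈ Q
      rw [h0]; exact Q.zero_mem
    exact h _ ⟨hprime, hN⟩

end Aux

theorem stmt11 {R M : Type*} [CommRing R] [AddCommGroup M] [Module R M]
    (N : Submodule R M) (hNJ : N ≤ (⊥ : Ideal R).jacobson • (⊤ : Submodule R M)) :
    (IsQuasiJSubmodule N ↔
      (Nontrivial (M ⧸ N) ∧ IsQuasiJPresimplifiable R (M ⧸ N))) ∧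
    (IsJSubmodule N ↔
      (Nontrivial (M ⧸ N) ∧ IsJPresimplifiable R (M ⧸ N))) := by
  have hjac := jac_colon_quot N hNJ
  have hne : (N ≠ ⊤) ↔ Nontrivial (M ⧸ N) := by
    rw [← not_subsingleton_iff_nontrivial, Submodule.Quotient.subsingleton_iff]
  constructor
  · constructor
    · rintro ⟨hNt, hq⟩
      refine ⟨hne.mp hNt, ?_⟩
      rintro r ⟨x, hx, hrx⟩
      obtain ⟨m, rfl⟩ := N.mkQ_surjective x
      have hrm : r • m ∈ N := (Submodule.Quotient.mk_eq_zero N).mp (by simpa using hrx)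
      by_contra hr
      rw [SetLike.mem_coe, hjac] at hr
      exact hx ((mrad_quot N m).mpr (hq r m hrm hr))
    · rintro ⟨hnt, hpre⟩
      refine ⟨hne.mpr hnt, ?_⟩
      intro r m hrm hr
      by_contra hm
      have : r ∈ NZdiv R (M ⧸ N) := ⟨N.mkQ m, fun h => hm ((mrad_quot N m).mp h),
        by simpa using (Submodule.Quotient.mk_eq_zero N).mpr hrm⟩
      exact hr ((hjac r).mp (hpre this))
  · constructor
    · rintro ⟨hNt, hq⟩
      refine ⟨hne.mp hNt, ?_⟩
      rintro r ⟨x, hx, hrx⟩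
      obtain ⟨m, rfl⟩ := N.mkQ_surjective x
      have hrm : r • m ∈ N := (Submodule.Quotient.mk_eq_zero N).mp (by simpa using hrx)
      by_contra hr
      rw [SetLike.mem_coe, hjac] at hr
      exact hx ((Submodule.Quotient.mk_eq_zero N).mpr (hq r m hrm hr))
    · rintro ⟨hnt, hpre⟩
      refine ⟨hne.mpr hnt, ?_⟩
      intro r m hrm hr
      by_contra hm
      have : r ∈ Zdiv R (M ⧸ N) := ⟨N.mkQ m, fun h => hm ((Submodule.Quotient.mk_eq_zero N).mp h),
        by simpa using (Submodule.Quotient.mk_eq_zero N).mpr hrm⟩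
      exact hr ((hjac r).mp (hpre this))
end

section
/- Let M be a J-presimplifiable R-module and let N be an r-submodule of M. Then N is a J-submodule of M (and in particular a quasi J-submodule of M). -/
open Submodule Pointwise

theorem stmt12 {R M : Type*} [CommRing R] [AddCommGroup M] [Module R M]
    (hM : IsJPresimplifiable R M) (N : Submodule R M) (hNproper : N ≠ ⊤)
    (hr : ∀ (a : R) (m : M), a • m ∈ N → (∀ x : M, a • x = 0 → x = 0) → m ∈ N) :
    IsJSubmodule N ∧ IsQuasiJSubmodule N := by
  have key : ∀ (r : R) (m : M), r • m ∈ N → r ∉ jacobsonColon R M → m ∈ N := by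
    intro r m hrm hrJ
    refine hr r m hrm ?_
    intro x hx
    by_contra hxne
    exact hrJ (hM ⟨x, hxne, hx⟩)
  refine ⟨⟨hNproper, key⟩, hNproper, ?_⟩
  intro r m hrm hrJ
  have hm := key r m hrm hrJ
  exact Submodule.mem_sInf.2 fun P hP => hP.2 hm
end

section
/- Let M be a finitely generated faithful multiplication R-module and I an ideal of R. Then I is a quasi J-ideal of R if and only if IM is a quasi J-submodule of M. -/
open Submodule Pointwise

section Aux

variable {R M : Type*} [CommRing R] [AddCommGroup M] [Module R M] [Module.Finite R M]

/-- For a f.g. faithful multiplication module, `(AM : M) = A` (cancellation). -/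
lemma colon_smul_top
    (hfaithful : ∀ r : R, (∀ m : M, r • m = 0) → r = 0)
    (hmult : ∀ N : Submodule R M, N = N.colon ⊤ • (⊤ : Submodule R M))
    (A : Ideal R) : (A • (⊤ : Submodule R M)).colon ⊤ = A := by
  apply le_antisymm
  · intro r hr
    by_contra hrA
    set K : Ideal R := A.colon (Ideal.span {r}) with hK
    have hKne : K ≠ ⊤ := by
      intro h
      have h1 : (1 : R) ∈ K := h ▸ Submodule.mem_top
      rw [hK, Ideal.mem_colon_span_singleton, one_mul] at h1
      exact hrA h1
    obtain ⟨m, hmmax, hKm⟩ := Ideal.exists_le_maximal K hKne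
    -- M ≠ mM by Nakayama + faithfulness
    have htop : ¬ ((⊤ : Submodule R M) ≤ m • ⊤) := by
      intro hle
      obtain ⟨c, hc1, hc0⟩ :=
        Submodule.exists_sub_one_mem_and_smul_eq_zero_of_fg_of_le_smul m ⊤
          (Module.Finite.fg_top (R := R) (M := M)) hle
      have hc : c = 0 := hfaithful c fun x => hc0 x Submodule.mem_top
      rw [hc, zero_sub] at hc1
      exact hmmax.ne_top (Ideal.eq_top_of_isUnit_mem m hc1 (IsUnit.neg isUnit_one))
    obtain ⟨y, -, hy⟩ := Set.not_subset.mp fun h => htop fun x hx => h hx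
    set C : Ideal R := (Submodule.span R {y}).colon ⊤ with hC
    have hspan : Submodule.span R {y} = C • ⊤ := hmult _
    have hCm : ¬ C ≤ m := by
      intro h
      have hyC : y ∈ C • (⊤ : Submodule R M) :=
        hspan ▸ Submodule.mem_span_singleton_self y
      exact hy (Submodule.smul_mono_left h hyC)
    obtain ⟨s, hsC, hsm⟩ := Set.not_subset.mp hCm
    have hsM : ∀ x : M, s • x ∈ Submodule.span R {y} := fun x =>
      Submodule.mem_colon.mp hsC x (Set.mem_univ _)
    have hry : r • y ∈ A • (⊤ : Submodule R M) :=
      Submodule.mem_colon.mp hr y (Set.mem_univ _)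
    have key : s • (r • y) ∈ A • Submodule.span R {y} := by
      refine Submodule.smul_induction_on (p := fun z => s • z ∈ A • Submodule.span R {y})
        hry ?_ ?_
      · intro a ha x _
        rw [smul_comm]
        exact Submodule.smul_mem_smul ha (hsM x)
      · intro z w hz hw
        rw [smul_add]
        exact Submodule.add_mem _ hz hw
    have hex : ∃ a ∈ A, s • (r • y) = a • y := by
      refine Submodule.smul_induction_on (p := fun z => ∃ a ∈ A, z = a • y) key ?_ ?_
      · intro a ha z hz
        obtain ⟨c, hc⟩ := Submodule.mem_span_singleton.mp hz
        exact ⟨a * c, Ideal.mul_mem_right c A ha, by rw [← hc, smul_smul]⟩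
      · rintro z w ⟨a, ha, rfl⟩ ⟨b, hb, rfl⟩
        exact ⟨a + b, A.add_mem ha hb, (add_smul a b y).symm⟩
    obtain ⟨a, ha, heq⟩ := hex
    have h0 : (s * r - a) • y = 0 := by
      rw [sub_smul, mul_smul, heq, sub_self]
    have hann : ∀ x : M, ((s * r - a) * s) • x = 0 := by
      intro x
      obtain ⟨c, hc⟩ := Submodule.mem_span_singleton.mp (hsM x)
      rw [mul_smul, ← hc, smul_comm, h0, smul_zero]
    have hz : (s * r - a) * s = 0 := hfaithful _ hann
    have hsK : s * s ∈ K := by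
      rw [hK, Ideal.mem_colon_span_singleton]
      have : s * s * r = a * s := by ring_nf; ring_nf at hz; linear_combination hz
      rw [this]
      exact Ideal.mul_mem_right s A ha
    exact hsm (hmmax.isPrime.mem_of_pow_mem 2 (by rw [pow_two]; exact hKm hsK))
  · intro a ha
    exact Submodule.mem_colon.mpr fun x _ => Submodule.smul_mem_smul ha Submodule.mem_top

lemma prime_smul_top
    (hfaithful : ∀ r : R, (∀ m : M, r • m = 0) → r = 0)
    (hmult : ∀ N : Submodule R M, N = N.colon ⊤ • (⊤ : Submodule R M))
    (p : Ideal R) (hp : p.IsPrime) :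
    IsPrimeSubmodule (p • (⊤ : Submodule R M)) := by
  have hcolon := colon_smul_top hfaithful hmult p
  constructor
  · intro h
    have : ((p • (⊤ : Submodule R M)).colon ⊤) = ⊤ := by
      rw [h]; exact le_antisymm le_top (fun x _ => Submodule.mem_colon.mpr
        fun q _ => Submodule.mem_top)
    exact hp.ne_top (by rw [← hcolon, this])
  · intro r x hrx
    by_cases hr : r ∈ p
    · right; rw [hcolon]; exact hr
    · left
      set C : Ideal R := (Submodule.span R {x}).colon ⊤ with hC
      have hspan : Submodule.span R {x} = C • ⊤ := hmult _
      have hCle : C ≤ p := by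
        intro c hc
        have hrc : r * c ∈ (p • (⊤ : Submodule R M)).colon ⊤ := by
          refine Submodule.mem_colon.mpr fun q _ => ?_
          obtain ⟨t, ht⟩ := Submodule.mem_span_singleton.mp
            (Submodule.mem_colon.mp hc q (Set.mem_univ _))
          rw [mul_smul, ← ht, smul_comm]
          exact Submodule.smul_mem _ t hrx
        rw [hcolon] at hrc
        rcases hp.mem_or_mem hrc with h | h
        · exact absurd h hr
        · exact h
      have : x ∈ C • (⊤ : Submodule R M) :=
        hspan ▸ Submodule.mem_span_singleton_self x
      exact Submodule.smul_mono_left hCle this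

lemma mrad_eq
    (hfaithful : ∀ r : R, (∀ m : M, r • m = 0) → r = 0)
    (hmult : ∀ N : Submodule R M, N = N.colon ⊤ • (⊤ : Submodule R M))
    (I : Ideal R) :
    Mrad (I • (⊤ : Submodule R M)) = I.radical • (⊤ : Submodule R M) := by
  apply le_antisymm
  · -- Mrad ≤ √I • ⊤
    have hcol : (Mrad (I • (⊤ : Submodule R M))).colon ⊤ ≤ I.radical := by
      rw [Ideal.radical_eq_sInf]
      intro c hc
      rw [Ideal.mem_sInf]
      rintro p ⟨hIp, hpprime⟩
      have hPmem : (p • (⊤ : Submodule R M)) ∈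
          {P : Submodule R M | IsPrimeSubmodule P ∧ I • (⊤ : Submodule R M) ≤ P} :=
        ⟨prime_smul_top hfaithful hmult p hpprime, Submodule.smul_mono_left hIp⟩
      have hle : Mrad (I • (⊤ : Submodule R M)) ≤ p • ⊤ := sInf_le hPmem
      have : c ∈ (p • (⊤ : Submodule R M)).colon ⊤ :=
        Submodule.mem_colon.mpr fun q hq =>
          hle (Submodule.mem_colon.mp hc q hq)
      rwa [colon_smul_top hfaithful hmult p] at this
    calc Mrad (I • (⊤ : Submodule R M))
        = (Mrad (I • (⊤ : Submodule R M))).colon ⊤ • ⊤ := hmult _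
      _ ≤ I.radical • ⊤ := Submodule.smul_mono_left hcol
  · -- √I • ⊤ ≤ Mrad
    apply le_sInf
    rintro P ⟨hPprime, hIP⟩
    have hpcol : I.radical ≤ P.colon ⊤ := by
      have hprime : (P.colon ⊤).IsPrime := by
        constructor
        · intro h
          have : (1 : R) ∈ P.colon ⊤ := h ▸ Submodule.mem_top
          have := Submodule.mem_colon.mp this
          apply hPprime.1
          exact le_antisymm le_top fun x _ => by simpa using this x (Set.mem_univ _)
        · intro a b hab
          by_cases ha : a ∈ P.colon ⊤
          · exact Or.inl ha
          · right
            refine Submodule.mem_colon.mpr fun x _ => ?_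
            have : a • (b • x) ∈ P := by
              rw [← mul_smul]
              exact Submodule.mem_colon.mp hab x (Set.mem_univ _)
            rcases hPprime.2 a (b • x) this with h | h
            · exact h
            · exact absurd h ha
      have hIle : I ≤ P.colon ⊤ := fun c hc =>
        Submodule.mem_colon.mpr fun x _ => hIP (Submodule.smul_mem_smul hc Submodule.mem_top)
      rw [Ideal.radical_eq_sInf]
      exact sInf_le ⟨hIle, hprime⟩
    calc I.radical • (⊤ : Submodule R M) ≤ P.colon ⊤ • ⊤ := Submodule.smul_mono_left hpcol
      _ ≤ P := by rw [← hmult P]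

lemma jacobson_radical_radical {a : R} {n : ℕ} (h : a ^ n ∈ (⊥ : Ideal R).jacobson) :
    a ∈ (⊥ : Ideal R).jacobson := by
  rw [Ideal.jacobson, Ideal.mem_sInf] at h ⊢
  rintro J ⟨hJ, hJmax⟩
  exact hJmax.isPrime.mem_of_pow_mem n (h ⟨hJ, hJmax⟩)

end Aux

theorem stmt13 {R M : Type*} [CommRing R] [AddCommGroup M] [Module R M]
    [Module.Finite R M]
    (hfaithful : ∀ r : R, (∀ m : M, r • m = 0) → r = 0)
    (hmult : ∀ N : Submodule R M, N = N.colon ⊤ • (⊤ : Submodule R M))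
    (I : Ideal R) :
    IsQuasiJIdeal I ↔ IsQuasiJSubmodule (I • (⊤ : Submodule R M)) := by
  have hstar := colon_smul_top hfaithful hmult
  have hjc : jacobsonColon R M = (⊥ : Ideal R).jacobson := hstar _
  have htopiff : ∀ A : Ideal R, A • (⊤ : Submodule R M) = ⊤ → A = ⊤ := by
    intro A hA
    rw [← hstar A, hA]
    exact le_antisymm le_top fun x _ => Submodule.mem_colon.mpr fun q _ => Submodule.mem_top
  constructor
  · rintro ⟨hIne, hradne, hradJ⟩
    constructor
    · intro h
      exact hIne (htopiff I h)
    · intro r m hrm hr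
      rw [hjc] at hr
      rw [mrad_eq hfaithful hmult]
      set C : Ideal R := (Submodule.span R {m}).colon ⊤ with hC
      have hspan : Submodule.span R {m} = C • ⊤ := hmult _
      have hCle : C ≤ I.radical := by
        intro c hc
        have hrc : r * c ∈ I := by
          rw [← hstar I]
          refine Submodule.mem_colon.mpr fun q _ => ?_
          obtain ⟨t, ht⟩ := Submodule.mem_span_singleton.mp
            (Submodule.mem_colon.mp hc q (Set.mem_univ _))
          rw [mul_smul, ← ht, smul_comm]
          exact Submodule.smul_mem _ t hrm
        exact hradJ r c (Ideal.le_radical hrc) hr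
      exact Submodule.smul_mono_left hCle
        (hspan ▸ Submodule.mem_span_singleton_self m)
  · rintro ⟨hNne, hq⟩
    have hIne : I ≠ ⊤ := by
      intro h
      apply hNne
      rw [h]; exact Submodule.top_smul ⊤
    refine ⟨hIne, ?_, ?_⟩
    · intro h
      exact hIne (Ideal.radical_eq_top.mp h)
    · intro a b hab ha
      obtain ⟨n, hn⟩ := hab
      have hbn : ∀ x : M, (b ^ n) • x ∈ Mrad (I • (⊤ : Submodule R M)) := by
        intro x
        refine hq (a ^ n) ((b ^ n) • x) ?_ ?_
        · rw [← mul_smul, ← mul_pow]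
          exact Submodule.smul_mem_smul hn Submodule.mem_top
        · rw [hjc]
          intro h
          exact ha (jacobson_radical_radical h)
      have hbn' : b ^ n ∈ I.radical := by
        rw [← hstar I.radical]
        refine Submodule.mem_colon.mpr fun x _ => ?_
        have := hbn x
        rwa [mrad_eq hfaithful hmult] at this
      have : b ∈ I.radical.radical := ⟨n, hbn'⟩
      rwa [Ideal.radical_idem] at this
end

section
/- Let M be a finitely generated faithful multiplication R-module and N a submodule of M. Then N is a quasi J-submodule of M if and only if (N : M) is a quasi J-ideal of R. -/
open Submodule Pointwise

section Aux

variable {R M : Type*} [CommRing R] [AddCommGroup M] [Module R M]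

/-- Key Cayley–Hamilton consequence: for f.g. faithful `M`, `(JM : M) ≤ √J`. -/
lemma colon_smul_top_le_radical [Module.Finite R M]
    (hfaithful : ∀ r : R, (∀ m : M, r • m = 0) → r = 0) (J : Ideal R) :
    ((J • (⊤ : Submodule R M)).colon ⊤) ≤ J.radical := by
  intro r hr
  have hrange : LinearMap.range ((algebraMap R (Module.End R M)) r) ≤ J • ⊤ := by
    rintro x ⟨m, rfl⟩
    exact Submodule.mem_colon.mp hr m trivial
  obtain ⟨p, hmonic, -, hcoeff, haeval⟩ :=
    LinearMap.exists_monic_and_coeff_mem_pow_and_aeval_eq_zero_of_range_le_smul R _ J hrange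
  have heval : p.eval r = 0 := by
    apply hfaithful
    intro m
    have h1 : Polynomial.aeval ((algebraMap R (Module.End R M)) r) p
        = (algebraMap R (Module.End R M)) (p.eval r) :=
      Polynomial.aeval_algebraMap_apply_eq_algebraMap_eval r p
    have := congrArg (fun f : Module.End R M => f m) (h1.symm.trans haeval)
    simpa [Module.algebraMap_end_apply] using this
  refine ⟨p.natDegree, ?_⟩
  have hsum := Polynomial.eval_eq_sum_range (p := p) r
  rw [Finset.sum_range_succ, hmonic.coeff_natDegree, one_mul, heval] at hsum
  have hpow : r ^ p.natDegree = -∑ i ∈ Finset.range p.natDegree, p.coeff i * r ^ i := by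
    linear_combination -hsum
  rw [hpow]
  refine neg_mem (Ideal.sum_mem _ fun i hi => Ideal.mul_mem_right _ _ ?_)
  exact Ideal.pow_le_self (Nat.sub_ne_zero_of_lt (Finset.mem_range.mp hi)) (hcoeff i)

lemma radical_jacobson_bot : ((⊥ : Ideal R).jacobson).radical = (⊥ : Ideal R).jacobson :=
  le_antisymm (Ideal.radical_le_jacobson.trans (Ideal.jacobson_idem).le) Ideal.le_radical

lemma jacobsonColon_eq [Module.Finite R M]
    (hfaithful : ∀ r : R, (∀ m : M, r • m = 0) → r = 0) :
    jacobsonColon R M = (⊥ : Ideal R).jacobson := by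
  refine le_antisymm ?_ ?_
  · exact (colon_smul_top_le_radical hfaithful _).trans radical_jacobson_bot.le
  · intro r hr
    exact Submodule.mem_colon.mpr fun m _ => Submodule.smul_mem_smul hr trivial

lemma colon_prime_smul [Module.Finite R M]
    (hfaithful : ∀ r : R, (∀ m : M, r • m = 0) → r = 0) (p : Ideal R) (hp : p.IsPrime) :
    ((p • (⊤ : Submodule R M)).colon ⊤) = p := by
  refine le_antisymm ?_ ?_
  · exact (colon_smul_top_le_radical hfaithful p).trans hp.radical.le
  · intro r hr
    exact Submodule.mem_colon.mpr fun m _ => Submodule.smul_mem_smul hr trivial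

lemma prime_smul_isPrime [Module.Finite R M]
    (hfaithful : ∀ r : R, (∀ m : M, r • m = 0) → r = 0)
    (hmult : ∀ N : Submodule R M, N = N.colon ⊤ • (⊤ : Submodule R M))
    (p : Ideal R) (hp : p.IsPrime) :
    IsPrimeSubmodule (p • (⊤ : Submodule R M)) := by
  constructor
  · intro h
    apply hp.ne_top
    rw [eq_top_iff]
    intro x _
    rw [← colon_prime_smul hfaithful p hp, h]
    exact Submodule.mem_colon.mpr fun m _ => trivial
  · intro r m hrm
    by_cases hr : r ∈ p
    · right
      exact Submodule.mem_colon.mpr fun m' _ => Submodule.smul_mem_smul hr trivial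
    · left
      set K := (Submodule.span R {m}).colon ⊤ with hK
      have hm : Submodule.span R {m} = K • ⊤ := hmult _
      have hKp : K ≤ p := by
        intro k hk
        have hrk : r * k ∈ ((p • (⊤ : Submodule R M)).colon ⊤) := by
          refine Submodule.mem_colon.mpr fun m' _ => ?_
          have hkm' : k • m' ∈ Submodule.span R {m} := by
            rw [hm]; exact Submodule.smul_mem_smul hk trivial
          obtain ⟨c, hc⟩ := Submodule.mem_span_singleton.mp hkm'
          have : (r * k) • m' = c • (r • m) := by
            rw [mul_smul, ← hc, smul_comm]
          rw [this]
          exact Submodule.smul_mem _ c hrm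
        rw [colon_prime_smul hfaithful p hp] at hrk
        exact (hp.mem_or_mem hrk).resolve_left hr
      have : m ∈ K • (⊤ : Submodule R M) := by
        rw [← hm]; exact Submodule.mem_span_singleton_self m
      exact Submodule.smul_mono_left hKp this

lemma colon_isPrime_of_primeSubmodule (P : Submodule R M) (h : IsPrimeSubmodule P) :
    (P.colon ⊤).IsPrime := by
  constructor
  · intro htop
    apply h.1
    rw [eq_top_iff]
    intro m _
    simpa using Submodule.mem_colon.mp (htop ▸ Submodule.mem_top : (1:R) ∈ P.colon ⊤) m trivial
  · intro a b hab
    by_cases ha : a ∈ P.colon ⊤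
    · exact Or.inl ha
    · refine Or.inr (Submodule.mem_colon.mpr fun m _ => ?_)
      have : a • (b • m) ∈ P := by
        rw [← mul_smul]; exact Submodule.mem_colon.mp hab m trivial
      exact (h.2 a (b • m) this).resolve_right ha

lemma colon_Mrad_le_radical [Module.Finite R M]
    (hfaithful : ∀ r : R, (∀ m : M, r • m = 0) → r = 0)
    (hmult : ∀ N : Submodule R M, N = N.colon ⊤ • (⊤ : Submodule R M))
    (N : Submodule R M) :
    ((Mrad N).colon ⊤) ≤ (N.colon ⊤).radical := by
  rw [Ideal.radical_eq_sInf]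
  refine le_sInf fun p hp => ?_
  have hprime : IsPrimeSubmodule (p • (⊤ : Submodule R M)) :=
    prime_smul_isPrime hfaithful hmult p hp.2
  have hNle : N ≤ p • ⊤ := by
    calc N = N.colon ⊤ • ⊤ := hmult N
    _ ≤ p • ⊤ := Submodule.smul_mono_left hp.1
  have hMrad : Mrad N ≤ p • ⊤ := sInf_le ⟨hprime, hNle⟩
  intro r hr
  rw [← colon_prime_smul hfaithful p hp.2]
  exact Submodule.mem_colon.mpr fun m hm => hMrad (Submodule.mem_colon.mp hr m hm)

lemma radical_smul_le_Mrad
    (hmult : ∀ N : Submodule R M, N = N.colon ⊤ • (⊤ : Submodule R M))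
    (N : Submodule R M) :
    (N.colon ⊤).radical • (⊤ : Submodule R M) ≤ Mrad N := by
  refine le_sInf fun P hP => ?_
  obtain ⟨hPprime, hNP⟩ := hP
  have hpprime : (P.colon ⊤).IsPrime := colon_isPrime_of_primeSubmodule P hPprime
  have hIle : N.colon ⊤ ≤ P.colon ⊤ := by
    intro r hr
    exact Submodule.mem_colon.mpr fun m hm => hNP (Submodule.mem_colon.mp hr m hm)
  have hradle : (N.colon ⊤).radical ≤ P.colon ⊤ := hpprime.radical_le_iff.mpr hIle
  calc (N.colon ⊤).radical • (⊤ : Submodule R M) ≤ P.colon ⊤ • ⊤ :=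
        Submodule.smul_mono_left hradle
    _ = P := (hmult P).symm

end Aux

theorem stmt14 {R M : Type*} [CommRing R] [AddCommGroup M] [Module R M]
    [Module.Finite R M]
    (hfaithful : ∀ r : R, (∀ m : M, r • m = 0) → r = 0)
    (hmult : ∀ N : Submodule R M, N = N.colon ⊤ • (⊤ : Submodule R M))
    (N : Submodule R M) :
    IsQuasiJSubmodule N ↔ IsQuasiJIdeal (N.colon ⊤) := by
  have hcolon_top : ∀ N' : Submodule R M, N' ≠ ⊤ → N'.colon ⊤ ≠ ⊤ := by
    intro N' hN' h
    apply hN'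
    rw [eq_top_iff]
    intro m _
    simpa using Submodule.mem_colon.mp (h ▸ Submodule.mem_top : (1:R) ∈ N'.colon ⊤) m trivial
  constructor
  · rintro ⟨hN, hq⟩
    have hI : N.colon ⊤ ≠ ⊤ := hcolon_top N hN
    refine ⟨hI, fun h => hI (Ideal.radical_eq_top.mp h), fun a b hab ha => ?_⟩
    obtain ⟨n, hn⟩ := hab
    have han : a ^ n ∉ jacobsonColon R M := by
      rw [jacobsonColon_eq hfaithful]
      intro h
      have : a ∈ ((⊥ : Ideal R).jacobson).radical := ⟨n, h⟩
      rw [radical_jacobson_bot] at this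
      exact ha this
    have hbn : b ^ n ∈ ((Mrad N).colon ⊤) := by
      refine Submodule.mem_colon.mpr fun m _ => ?_
      refine hq (a ^ n) (b ^ n • m) ?_ han
      rw [← mul_smul, ← mul_pow]
      exact Submodule.mem_colon.mp hn m trivial
    have : b ^ n ∈ (N.colon ⊤).radical := colon_Mrad_le_radical hfaithful hmult N hbn
    exact Ideal.mem_radical_of_pow_mem this
  · rintro ⟨hI, hrne, hJ⟩
    have hN : N ≠ ⊤ := by
      intro h
      apply hI
      rw [h, eq_top_iff]
      intro r _
      exact Submodule.mem_colon.mpr fun m _ => trivial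
    refine ⟨hN, fun r m hrm hr => ?_⟩
    have hrj : r ∉ (⊥ : Ideal R).jacobson := by
      intro h
      exact hr ((jacobsonColon_eq hfaithful) ▸ h)
    set K := (Submodule.span R {m}).colon ⊤ with hK
    have hm : Submodule.span R {m} = K • ⊤ := hmult _
    have hKrad : K ≤ (N.colon ⊤).radical := by
      intro k hk
      refine hJ r k ?_ hrj
      refine Ideal.le_radical (Submodule.mem_colon.mpr fun m' _ => ?_)
      have hkm' : k • m' ∈ Submodule.span R {m} := by
        rw [hm]; exact Submodule.smul_mem_smul hk trivial
      obtain ⟨c, hc⟩ := Submodule.mem_span_singleton.mp hkm'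
      have : (r * k) • m' = c • (r • m) := by
        rw [mul_smul, ← hc, smul_comm]
      rw [this]
      exact Submodule.smul_mem _ c hrm
    have hmmem : m ∈ K • (⊤ : Submodule R M) := by
      rw [← hm]; exact Submodule.mem_span_singleton_self m
    exact radical_smul_le_Mrad hmult N (Submodule.smul_mono_left hKrad hmmem)
end

section
/- Let M be a finitely generated faithful multiplication R-module. If I is a quasi J-ideal of R and N is a quasi J-submodule of M, then IN is a quasi J-submodule of M. -/
open Submodule Pointwise

/-- Determinant trick: if `M` is a finitely generated faithful module and `a • M ⊆ K M`,
then `a ∈ √K`. -/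
private lemma mem_radical_of_forall_smul_mem {R M : Type*} [CommRing R] [AddCommGroup M]
    [Module R M] [Module.Finite R M]
    (hfaithful : ∀ r : R, (∀ m : M, r • m = 0) → r = 0)
    {a : R} {K : Ideal R} (h : ∀ m : M, a • m ∈ K • (⊤ : Submodule R M)) :
    a ∈ K.radical := by
  obtain ⟨p, hmonic, -, hcoeff, heval⟩ :=
    LinearMap.exists_monic_and_coeff_mem_pow_and_aeval_eq_zero_of_range_le_smul R
      (algebraMap R (Module.End R M) a) K (by
        rintro x ⟨m, rfl⟩
        simpa [Module.algebraMap_end_apply] using h m)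
  rw [Polynomial.aeval_algebraMap_apply_eq_algebraMap_eval] at heval
  have heval' : Polynomial.eval a p = 0 := by
    apply hfaithful
    intro m
    have := congrArg (fun f : Module.End R M => f m) heval
    simpa [Module.algebraMap_end_apply] using this
  refine ⟨p.natDegree, ?_⟩
  have h1 : (0 : R) = (∑ i ∈ Finset.range p.natDegree, p.coeff i * a ^ i)
      + p.coeff p.natDegree * a ^ p.natDegree := by
    rw [← Finset.sum_range_succ, ← Polynomial.eval_eq_sum_range, heval']
  rw [hmonic.coeff_natDegree, one_mul] at h1
  have hsum : (∑ i ∈ Finset.range p.natDegree, p.coeff i * a ^ i) ∈ K := by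
    refine Ideal.sum_mem _ fun i hi => Ideal.mul_mem_right _ _ ?_
    exact Ideal.pow_le_self (Nat.sub_ne_zero_of_lt (Finset.mem_range.mp hi)) (hcoeff i)
  have h2 : a ^ p.natDegree = -(∑ i ∈ Finset.range p.natDegree, p.coeff i * a ^ i) := by
    linear_combination -h1
  rw [h2]
  exact neg_mem hsum

theorem stmt15 {R M : Type*} [CommRing R] [AddCommGroup M] [Module R M]
    [Module.Finite R M]
    (hfaithful : ∀ r : R, (∀ m : M, r • m = 0) → r = 0)
    (hmult : ∀ N : Submodule R M, N = N.colon ⊤ • (⊤ : Submodule R M))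
    (I : Ideal R) (hI : IsQuasiJIdeal I)
    (N : Submodule R M) (hN : IsQuasiJSubmodule N) :
    IsQuasiJSubmodule (I • N) := by
  obtain ⟨hNne, hNq⟩ := hN
  obtain ⟨hIne, hIradne, hIrad⟩ := hI
  constructor
  · intro h
    exact hNne (top_le_iff.mp (h ▸ Submodule.smul_le_right))
  · intro r m hrm hr
    -- r is not in the Jacobson radical
    have hrJ : r ∉ (⊥ : Ideal R).jacobson := by
      intro hrj
      exact hr (Submodule.mem_colon.mpr fun x _ => Submodule.smul_mem_smul hrj trivial)
    rw [Mrad, Submodule.mem_sInf]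
    rintro P ⟨⟨hPne, hPprime⟩, hINP⟩
    set p : Ideal R := P.colon ⊤ with hpdef
    -- p is a proper prime ideal
    have hpne : p ≠ ⊤ := by
      intro h
      apply hPne
      rw [eq_top_iff]
      intro x _
      simpa using Submodule.mem_colon.mp (h ▸ Submodule.mem_top : (1 : R) ∈ p) x trivial
    have hpPrime : p.IsPrime := by
      refine ⟨hpne, ?_⟩
      intro a b hab
      by_cases ha : a ∈ p
      · exact Or.inl ha
      · refine Or.inr (Submodule.mem_colon.mpr fun x _ => ?_)
        have h1 : a • (b • x) ∈ P := by
          have := Submodule.mem_colon.mp hab x trivial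
          rwa [mul_smul] at this
        rcases hPprime a (b • x) h1 with h | h
        · exact h
        · exact absurd h ha
    -- B = (span{m} : M)
    set B : Ideal R := (Submodule.span R {m}).colon ⊤ with hBdef
    have hB : Submodule.span R {m} = B • (⊤ : Submodule R M) := hmult _
    -- key: for every b ∈ B and x ∈ M, (r*b) • x ∈ I • N
    have hrB : ∀ b ∈ B, ∀ x : M, (r * b) • x ∈ I • N := by
      intro b hb x
      have hbx : b • x ∈ Submodule.span R {m} := Submodule.mem_colon.mp hb x trivial
      obtain ⟨c, hc⟩ := Submodule.mem_span_singleton.mp hbx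
      rw [mul_smul, ← hc, smul_comm]
      exact Submodule.smul_mem _ c hrm
    -- if B ≤ p then m ∈ P
    have finish : (∀ b ∈ B, b ∈ p) → m ∈ P := by
      intro hBp
      have hm : m ∈ B • (⊤ : Submodule R M) := hB ▸ Submodule.mem_span_singleton_self m
      have hle : B • (⊤ : Submodule R M) ≤ P :=
        Submodule.smul_le.mpr fun b hb x _ => Submodule.mem_colon.mp (hBp b hb) x trivial
      exact hle hm
    by_cases hrp : r ∈ p
    · -- I * (N : M) ≤ p, so I ≤ p or (N : M) ≤ p
      have hIA : I * (N.colon ⊤) ≤ p := by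
        rw [Ideal.mul_le]
        intro a ha a' ha'
        refine Submodule.mem_colon.mpr fun x _ => ?_
        have h1 : a' • x ∈ N := Submodule.mem_colon.mp ha' x trivial
        have h2 : a • (a' • x) ∈ I • N := Submodule.smul_mem_smul ha h1
        rw [mul_smul]
        exact hINP h2
      rcases hpPrime.mul_le.mp hIA with hIp | hAp
      · -- I ≤ p: use the determinant trick and the J-ideal property of √I
        refine finish fun b hb => ?_
        have h1 : r * b ∈ I.radical := by
          refine mem_radical_of_forall_smul_mem hfaithful fun x => ?_
          exact Submodule.smul_mono le_rfl le_top (hrB b hb x)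
        have h2 : b ∈ I.radical := hIrad r b h1 hrJ
        exact hpPrime.radical_le_iff.mpr hIp h2
      · -- (N : M) ≤ p: then N ≤ P and we can use that N is a quasi J-submodule
        have hNP : N ≤ P := by
          rw [hmult N]
          exact Submodule.smul_le.mpr fun a ha x _ => Submodule.mem_colon.mp (hAp ha) x trivial
        have hrmN : r • m ∈ N := Submodule.smul_le_right hrm
        have hm := hNq r m hrmN hr
        rw [Mrad, Submodule.mem_sInf] at hm
        exact hm P ⟨⟨hPne, hPprime⟩, hNP⟩
    · -- r ∉ p: since r*b ∈ p for all b ∈ B, primality gives B ≤ p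
      refine finish fun b hb => ?_
      have h1 : r * b ∈ p := Submodule.mem_colon.mpr fun x _ => hINP (hrB b hb x)
      exact (hpPrime.mem_or_mem h1).resolve_left hrp
end

section
/- Let M be a faithful multiplication R-module, N a submodule of M, and I a finitely generated faithful multiplication ideal of R. If IN is a J-submodule of M, then either I is a J-ideal of R or N is a J-submodule of M. -/
open Submodule Pointwise

theorem stmt16 {R M : Type*} [CommRing R] [AddCommGroup M] [Module R M]
    (hfaithful : ∀ r : R, (∀ m : M, r • m = 0) → r = 0)
    (hmult : ∀ N : Submodule R M, N = N.colon ⊤ • (⊤ : Submodule R M))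
    (I : Ideal R) (hIfg : I.FG)
    (hIfaithful : ∀ r : R, (∀ a ∈ I, r * a = 0) → r = 0)
    (hImult : ∀ J : Ideal R, J ≤ I → ∃ C : Ideal R, J = C * I)
    (N : Submodule R M) (hIN : IsJSubmodule (I • N)) :
    IsJIdeal I ∨ IsJSubmodule N := by
  classical
  obtain ⟨hKtop, hP⟩ := hIN
  by_cases hItop : I = ⊤
  · right
    rw [hItop, Submodule.top_smul] at hKtop hP
    exact ⟨hKtop, hP⟩
  -- torsion-freeness of M with respect to I
  have TF : ∀ z : M, (∀ i ∈ I, i • z = 0) → z = 0 := by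
    intro z hz
    have hspan := hmult (Submodule.span R {z})
    have hDbot : (Submodule.span R {z}).colon ⊤ = ⊥ := by
      rw [eq_bot_iff]
      intro d hd
      have h2 : ∀ a ∈ I, d * a = 0 := by
        intro i hi
        have : i * d = 0 := by
          apply hfaithful
          intro x
          have hdx : d • x ∈ Submodule.span R {z} :=
            Submodule.mem_colon.mp hd x (by simp)
          obtain ⟨t, ht⟩ := Submodule.mem_span_singleton.mp hdx
          calc (i * d) • x = i • d • x := mul_smul i d x
            _ = i • t • z := by rw [← ht]
            _ = t • i • z := smul_comm i t z
            _ = t • (0 : M) := by rw [hz i hi]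
            _ = 0 := smul_zero t
        calc d * i = i * d := mul_comm d i
          _ = 0 := this
      simpa using hIfaithful d h2
    have hzbot : Submodule.span R {z} = ⊥ := by
      rw [hspan, hDbot, Submodule.bot_smul]
    have : z ∈ (⊥ : Submodule R M) := by
      rw [← hzbot]; exact Submodule.mem_span_singleton_self z
    simpa using this
  -- local principality of I at every maximal ideal
  have L1 : ∀ m : Ideal R, m.IsMaximal →
      ∃ e ∈ I, ∃ q ∈ m, ∀ i ∈ I, ∃ s : R, (1 - q) * i = s * e := by
    intro m hm
    obtain ⟨T, hT⟩ := hIfg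
    by_cases hcase : ∃ g ∈ T, ∃ C : Ideal R, Submodule.span R {g} = C * I ∧ ¬ C ≤ m
    · obtain ⟨g, hgT, C, hC, hCm⟩ := hcase
      obtain ⟨c, hcC, hcm⟩ := SetLike.not_le_iff_exists.mp hCm
      obtain ⟨u, q, hq, huq⟩ := hm.exists_inv hcm
      refine ⟨g, ?_, q, hq, ?_⟩
      · rw [← hT]
        exact Submodule.subset_span hgT
      · intro i hi
        have hci : c * i ∈ Submodule.span R {g} := by
          rw [hC]; exact Ideal.mul_mem_mul hcC hi
        obtain ⟨t, ht⟩ := Submodule.mem_span_singleton.mp hci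
        refine ⟨u * t, ?_⟩
        have h1q : 1 - q = u * c := by rw [← huq]; ring
        rw [h1q]
        calc u * c * i = u * (c * i) := by ring
          _ = u * (t • g) := by rw [ht]
          _ = u * t * g := by rw [smul_eq_mul]; ring
    · push_neg at hcase
      have hle : I ≤ m • (I : Ideal R) := by
        conv_lhs => rw [← hT]
        rw [Ideal.span_le]
        intro g hgT
        obtain ⟨C, hC⟩ := hImult (Submodule.span R {g})
          (by rw [← hT]; exact Submodule.span_mono (Set.singleton_subset_iff.mpr hgT))
        have hCle : C ≤ m := hcase g hgT C hC
        have hg : g ∈ C * I := by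
          rw [← hC]; exact Submodule.mem_span_singleton_self g
        have hmul : C * I ≤ m • (I : Ideal R) := by
          rw [Ideal.mul_le]
          intro r hr s hs
          rw [← smul_eq_mul]
          exact Submodule.smul_mem_smul (hCle hr) hs
        exact hmul hg
      obtain ⟨r, hr1, hr0⟩ :=
        Submodule.exists_sub_one_mem_and_smul_eq_zero_of_fg_of_le_smul m I ⟨T, hT⟩ hle
      have hr00 : r = 0 := by
        apply hIfaithful
        intro a ha
        rw [← smul_eq_mul]
        exact hr0 a ha
      exfalso
      apply hm.ne_top
      rw [Ideal.eq_top_iff_one]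
      have hneg : (-1 : R) ∈ m := by
        rw [hr00] at hr1; simpa using hr1
      simpa using m.neg_mem hneg
  -- cancellation: if I • x ⊆ I • W then x ∈ W
  have L2M : ∀ (x : M) (W : Submodule R M), (∀ i ∈ I, i • x ∈ I • W) → x ∈ W := by
    intro x W hx
    by_contra hxW
    have hGtop : W.colon (Submodule.span R {x}) ≠ ⊤ := by
      intro h
      apply hxW
      have h1 : (1 : R) ∈ W.colon (Submodule.span R {x}) := by rw [h]; exact Submodule.mem_top
      simpa using Submodule.mem_colon.mp h1 x (Submodule.mem_span_singleton_self x)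
    obtain ⟨m, hm, hGm⟩ := Ideal.exists_le_maximal _ hGtop
    obtain ⟨e, heI, q, hqm, hL⟩ := L1 m hm
    have key : ∀ y ∈ I • W, ∃ n ∈ W, (1 - q) • y = e • n := by
      intro y hy
      refine Submodule.smul_induction_on hy ?_ ?_
      · intro r hr n hn
        obtain ⟨s, hs⟩ := hL r hr
        refine ⟨s • n, W.smul_mem s hn, ?_⟩
        rw [smul_smul, hs, smul_smul, mul_smul, mul_smul]
        rw [smul_comm e s n]
      · rintro y1 y2 ⟨n1, hn1, h1⟩ ⟨n2, hn2, h2⟩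
        exact ⟨n1 + n2, W.add_mem hn1 hn2, by rw [smul_add, h1, h2, smul_add]⟩
    obtain ⟨n₀, hn₀, hkey⟩ := key (e • x) (hx e heI)
    have hz0 : (1 - q) • ((1 - q) • x - n₀) = 0 := by
      apply TF
      intro i hi
      obtain ⟨s, hs⟩ := hL i hi
      have h1 : i • ((1 - q) • ((1 - q) • x - n₀)) = s • (e • ((1 - q) • x - n₀)) := by
        rw [smul_smul, mul_comm i (1 - q), hs, mul_smul]
      rw [h1]
      have h2 : e • ((1 - q) • x - n₀) = 0 := by
        rw [smul_sub, smul_comm e (1 - q) x, hkey, sub_self]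
      rw [h2, smul_zero]
    have hx2 : ((1 - q) * (1 - q)) • x ∈ W := by
      have hsub : (1 - q) • ((1 - q) • x) = (1 - q) • n₀ := by
        have h := hz0
        rw [smul_sub] at h
        exact sub_eq_zero.mp h
      rw [mul_smul, hsub]
      exact W.smul_mem _ hn₀
    have hmem : ((1 - q) * (1 - q)) ∈ W.colon (Submodule.span R {x}) := by
      rw [Submodule.mem_colon]
      intro p hp
      obtain ⟨t, ht⟩ := Submodule.mem_span_singleton.mp hp
      rw [← ht, smul_comm]
      exact W.smul_mem t hx2
    have h1q : (1 - q) ∈ m := by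
      rcases hm.isPrime.mem_or_mem (hGm hmem) with h | h <;> exact h
    apply hm.ne_top
    rw [Ideal.eq_top_iff_one]
    have := m.add_mem hqm h1q
    simpa using this
  -- swap two ideal actions on a submodule
  have SWAP : ∀ (A B : Ideal R) (W : Submodule R M), A • (B • W) = B • (A • W) := by
    intro A B W
    rw [← Submodule.smul_assoc, ← Submodule.smul_assoc, Ideal.smul_eq_mul, Ideal.smul_eq_mul,
      mul_comm]
  -- membership in the jacobson colon ideal, unfolded
  have hTmem : ∀ c : R, c ∈ jacobsonColon R M →
      ∀ x : M, c • x ∈ (⊥ : Ideal R).jacobson • (⊤ : Submodule R M) := by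
    intro c hc x
    have hc' : c ∈ ((⊥ : Ideal R).jacobson • (⊤ : Submodule R M)).colon ⊤ := hc
    exact Submodule.mem_colon.mp hc' x (by simp)
  -- Nakayama for cyclic submodules
  have NAKx : ∀ (m : Ideal R) (x : M), Submodule.span R {x} ≤ m • Submodule.span R {x} →
      ∃ q ∈ m, (1 - q) • x = 0 := by
    intro m x hle
    obtain ⟨r, hr1, hr0⟩ :=
      Submodule.exists_sub_one_mem_and_smul_eq_zero_of_fg_of_le_smul m _
        (Submodule.fg_span_singleton x) hle
    refine ⟨1 - r, by simpa using m.neg_mem hr1, ?_⟩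
    have e : (1 : R) - (1 - r) = r := by ring
    rw [e]
    exact hr0 x (Submodule.mem_span_singleton_self x)
  -- extraction along a uniform cyclic witness
  have EXT : ∀ (A : Ideal R) (z : M) (u : R), (∀ y : M, ∃ s : R, u • y = s • z) →
      ∀ w ∈ A • (⊤ : Submodule R M), ∃ g ∈ A, u • w = g • z := by
    intro A z u huni w hw
    refine Submodule.smul_induction_on hw ?_ ?_
    · intro r hr n _
      obtain ⟨s, hs⟩ := huni n
      refine ⟨r * s, Ideal.mul_mem_right s A hr, ?_⟩
      rw [smul_comm u r n, hs, smul_smul]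
    · rintro w1 w2 ⟨g1, hg1, e1⟩ ⟨g2, hg2, e2⟩
      exact ⟨g1 + g2, A.add_mem hg1 hg2, by rw [smul_add, e1, e2, add_smul]⟩
  -- spreading an annihilation of the cyclic generator over all of M
  have SPREAD : ∀ (z : M) (u δ : R), (∀ y : M, ∃ s : R, u • y = s • z) → δ • z = 0 →
      δ * u = 0 := by
    intro z u δ huni hz
    apply hfaithful
    intro y
    obtain ⟨s, hs⟩ := huni y
    calc (δ * u) • y = δ • (u • y) := mul_smul δ u y
      _ = δ • (s • z) := by rw [hs]
      _ = s • (δ • z) := smul_comm δ s z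
      _ = 0 := by rw [hz, smul_zero]
  -- uniform cyclic witness at a maximal ideal not containing some colon ideal
  have UNI : ∀ m : Ideal R, m.IsMaximal → ∀ z : M, ¬ ((Submodule.span R {z}).colon ⊤ ≤ m) →
      ∃ q ∈ m, ∀ y : M, ∃ s : R, (1 - q) • y = s • z := by
    intro m hm z hz
    obtain ⟨c₀, hc₀, hc₀m⟩ := SetLike.not_le_iff_exists.mp hz
    obtain ⟨u, q, hq, huq⟩ := hm.exists_inv hc₀m
    refine ⟨q, hq, ?_⟩
    intro y
    have h1q : (1 : R) - q = u * c₀ := by linear_combination -huq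
    obtain ⟨t, ht⟩ := Submodule.mem_span_singleton.mp
      (Submodule.mem_colon.mp hc₀ y (by simp))
    refine ⟨u * t, ?_⟩
    rw [h1q]
    calc (u * c₀) • y = u • (c₀ • y) := mul_smul u c₀ y
      _ = u • (t • z) := by rw [← ht]
      _ = (u * t) • z := (mul_smul u t z).symm
  -- the pointwise Jacobson lemma: elements of the jacobson colon act pointwise as
  -- elements of the Jacobson radical
  have COR : ∀ c ∈ jacobsonColon R M, ∀ x : M,
      ∃ j ∈ (⊥ : Ideal R).jacobson, c • x = j • x := by
    intro c hc x
    have hH : (1 : R) ∈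
        (((⊥ : Ideal R).jacobson • Submodule.span R {x}).colon (Submodule.span R {c • x})) := by
      by_contra h1H
      have hHtop :
          (((⊥ : Ideal R).jacobson • Submodule.span R {x}).colon (Submodule.span R {c • x}))
            ≠ ⊤ := by
        intro h
        exact h1H (h ▸ Submodule.mem_top)
      obtain ⟨m, hm, hHm⟩ := Ideal.exists_le_maximal _ hHtop
      by_cases hall : ∀ z : M, (Submodule.span R {z}).colon ⊤ ≤ m
      · -- every colon ideal is inside m : per-point torsion
        have htopm : (⊤ : Submodule R M) = m • ⊤ := by
          refine le_antisymm ?_ le_top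
          intro y _
          have h1 : y ∈ (Submodule.span R {y}).colon ⊤ • (⊤ : Submodule R M) := by
            rw [← hmult]
            exact Submodule.mem_span_singleton_self y
          exact Submodule.smul_mono_left (hall y) h1
        have e1 : ∀ A : Ideal R, A • (⊤ : Submodule R M) = m • (A • ⊤) := by
          intro A
          conv_lhs => rw [htopm]
          exact SWAP A m ⊤
        have hsp : Submodule.span R {x} ≤ m • Submodule.span R {x} := by
          refine le_of_eq ?_
          calc Submodule.span R {x}
              = (Submodule.span R {x}).colon ⊤ • (⊤ : Submodule R M) := hmult _
            _ = m • ((Submodule.span R {x}).colon ⊤ • (⊤ : Submodule R M)) := e1 _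
            _ = m • Submodule.span R {x} := by rw [← hmult]
        obtain ⟨q, hq, hq0⟩ := NAKx m x hsp
        have hmem : (1 - q) ∈
            (((⊥ : Ideal R).jacobson • Submodule.span R {x}).colon
              (Submodule.span R {c • x})) := by
          rw [Submodule.mem_colon]
          intro p hp
          obtain ⟨t, ht⟩ := Submodule.mem_span_singleton.mp hp
          rw [← ht]
          have e : (1 - q) • (t • (c • x)) = t • (c • ((1 - q) • x)) := by
            rw [smul_comm (1 - q) t, smul_comm (1 - q) c]
          rw [e, hq0, smul_zero, smul_zero]
          exact Submodule.zero_mem _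
        have h1qm := hHm hmem
        exact hm.ne_top ((Ideal.eq_top_iff_one m).mpr (by simpa using m.add_mem hq h1qm))
      · push_neg at hall
        obtain ⟨z, hz⟩ := hall
        obtain ⟨q, hq, huni⟩ := UNI m hm z hz
        have hcz : c • z ∈ (⊥ : Ideal R).jacobson • (⊤ : Submodule R M) := hTmem c hc z
        obtain ⟨j₁, hj₁, hj₁e⟩ := EXT _ z (1 - q) huni _ hcz
        have hdz : ((1 - q) * c - j₁) • z = 0 := by
          rw [sub_smul, mul_smul, hj₁e, sub_self]
        have hd : ((1 - q) * c - j₁) * (1 - q) = 0 := SPREAD z (1 - q) _ huni hdz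
        have hmem : (1 - q) * (1 - q) ∈
            (((⊥ : Ideal R).jacobson • Submodule.span R {x}).colon
              (Submodule.span R {c • x})) := by
          rw [Submodule.mem_colon]
          intro p hp
          obtain ⟨t, ht⟩ := Submodule.mem_span_singleton.mp hp
          rw [← ht]
          have e : ((1 - q) * (1 - q)) • (t • (c • x)) = t • ((((1 - q) * (1 - q)) * c) • x) := by
            rw [smul_comm _ t]
            congr 1
            rw [mul_smul ((1 - q) * (1 - q)) c x]
          have e2 : ((1 - q) * (1 - q)) * c = (1 - q) * j₁ := by linear_combination hd
          rw [e, e2]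
          exact Submodule.smul_mem _ t (Submodule.smul_mem_smul
            (Ideal.mul_mem_left _ _ hj₁) (Submodule.mem_span_singleton_self x))
        have h2m := hHm hmem
        have h1qm : (1 - q) ∈ m := by
          rcases hm.isPrime.mem_or_mem h2m with h | h <;> exact h
        exact hm.ne_top ((Ideal.eq_top_iff_one m).mpr (by simpa using m.add_mem hq h1qm))
    have hcx : c • x ∈ (⊥ : Ideal R).jacobson • Submodule.span R {x} := by
      have h := Submodule.mem_colon.mp hH (c • x) (Submodule.mem_span_singleton_self _)
      simpa using h
    have ext2 : ∀ w ∈ (⊥ : Ideal R).jacobson • Submodule.span R {x},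
        ∃ j ∈ (⊥ : Ideal R).jacobson, w = j • x := by
      intro w hw
      refine Submodule.smul_induction_on hw ?_ ?_
      · intro r hr n hn
        obtain ⟨t, ht⟩ := Submodule.mem_span_singleton.mp hn
        exact ⟨r * t, Ideal.mul_mem_right t _ hr, by rw [← ht, smul_smul]⟩
      · rintro w1 w2 ⟨j1, hj1, e1⟩ ⟨j2, hj2, e2⟩
        exact ⟨j1 + j2, Submodule.add_mem _ hj1 hj2, by rw [e1, e2, add_smul]⟩
    obtain ⟨j, hj, he⟩ := ext2 _ hcx
    exact ⟨j, hj, he⟩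
  -- the trace ideal machinery
  have htopθ : (⊤ : Submodule R M) =
      (⨆ x : M, (Submodule.span R {x}).colon ⊤) • (⊤ : Submodule R M) := by
    refine le_antisymm ?_ le_top
    intro y _
    have h1 : y ∈ (Submodule.span R {y}).colon ⊤ • (⊤ : Submodule R M) := by
      rw [← hmult]
      exact Submodule.mem_span_singleton_self y
    exact Submodule.smul_mono_left (le_iSup (fun x : M => (Submodule.span R {x}).colon ⊤) y) h1
  have hdiv : ∀ y : M, ∃ h ∈ (⨆ x : M, (Submodule.span R {x}).colon ⊤), h • y = y := by
    intro y
    have e2 : ∀ A : Ideal R, A • (⊤ : Submodule R M) =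
        (⨆ x : M, (Submodule.span R {x}).colon ⊤) • (A • ⊤) := by
      intro A
      conv_lhs => rw [htopθ]
      exact SWAP A _ ⊤
    have hy : y ∈ (⨆ x : M, (Submodule.span R {x}).colon ⊤) • Submodule.span R {y} := by
      have hsp : Submodule.span R {y} =
          (⨆ x : M, (Submodule.span R {x}).colon ⊤) • Submodule.span R {y} := by
        calc Submodule.span R {y}
            = (Submodule.span R {y}).colon ⊤ • (⊤ : Submodule R M) := hmult _
          _ = (⨆ x : M, (Submodule.span R {x}).colon ⊤) •
              ((Submodule.span R {y}).colon ⊤ • (⊤ : Submodule R M)) := e2 _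
          _ = (⨆ x : M, (Submodule.span R {x}).colon ⊤) • Submodule.span R {y} := by
              rw [← hmult]
      rw [← hsp]
      exact Submodule.mem_span_singleton_self y
    have key : ∀ w ∈ (⨆ x : M, (Submodule.span R {x}).colon ⊤) • Submodule.span R {y},
        ∃ h ∈ (⨆ x : M, (Submodule.span R {x}).colon ⊤), h • y = w := by
      intro w hw
      refine Submodule.smul_induction_on hw ?_ ?_
      · intro r hr n hn
        obtain ⟨t, ht⟩ := Submodule.mem_span_singleton.mp hn
        exact ⟨r * t, Ideal.mul_mem_right t _ hr, by rw [← ht, ← smul_smul]⟩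
      · rintro w1 w2 ⟨h1, hh1, f1⟩ ⟨h2, hh2, f2⟩
        exact ⟨h1 + h2, Submodule.add_mem _ hh1 hh2, by rw [add_smul, f1, f2]⟩
    exact key y hy
  have habs : ∀ (y : M) (α : R), α ∈ (Submodule.span R {y}).colon ⊤ →
      ∀ h : R, h • y = y → h * α = α := by
    intro y α hα h hy
    have hzero : ∀ x : M, (h * α - α) • x = 0 := by
      intro x
      obtain ⟨t, ht⟩ := Submodule.mem_span_singleton.mp
        (Submodule.mem_colon.mp hα x (by simp))
      have f1 : (h * α) • x = α • x := by
        calc (h * α) • x = h • (α • x) := mul_smul h α x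
          _ = h • (t • y) := by rw [← ht]
          _ = t • (h • y) := smul_comm h t y
          _ = t • y := by rw [hy]
          _ = α • x := ht
      rw [sub_smul, f1, sub_self]
    exact sub_eq_zero.mp (hfaithful _ hzero)
  have hpure : ∀ h ∈ (⨆ x : M, (Submodule.span R {x}).colon ⊤),
      ∃ h' ∈ (⨆ x : M, (Submodule.span R {x}).colon ⊤), h' * h = h := by
    intro h hh
    refine Submodule.iSup_induction (motive := fun h : R =>
      ∃ h' ∈ (⨆ x : M, (Submodule.span R {x}).colon ⊤), h' * h = h)
      (fun y : M => (Submodule.span R {y}).colon ⊤) hh ?_ ?_ ?_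
    · intro y α hα
      obtain ⟨hy, hhy, hey⟩ := hdiv y
      exact ⟨hy, hhy, habs y α hα hy hey⟩
    · exact ⟨0, Submodule.zero_mem _, by ring⟩
    · rintro h1 h2 ⟨h1', hh1', f1⟩ ⟨h2', hh2', f2⟩
      refine ⟨h1' + h2' - h1' * h2', ?_, ?_⟩
      · exact Submodule.sub_mem _ (Submodule.add_mem _ hh1' hh2')
          (Ideal.mul_mem_right _ _ hh1')
      · linear_combination (1 - h2') * f1 + (1 - h1') * f2
  -- the key finiteness-type conclusion: 1 lies in the trace ideal
  have hone : (1 : R) ∈ (⨆ x : M, (Submodule.span R {x}).colon ⊤) := by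
    have hex : ∃ h, h ∈ (⨆ x : M, (Submodule.span R {x}).colon ⊤) ∧
        ∃ y : M, h • y ∉ I • N := by
      by_contra hcon
      push_neg at hcon
      apply hKtop
      rw [eq_top_iff]
      intro y _
      obtain ⟨h, hh, he⟩ := hdiv y
      rw [← he]
      exact hcon h hh y
    obtain ⟨hs, hhs, y₀, hy₀⟩ := hex
    obtain ⟨h', hh', he'⟩ := hpure hs hhs
    have hT1h' : (1 - h') ∈ jacobsonColon R M := by
      by_contra hnot
      apply hy₀
      apply hP (1 - h') (hs • y₀) ?_ hnot
      have e0 : (1 - h') * hs = 0 := by linear_combination -he'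
      have e : (1 - h') • (hs • y₀) = ((1 - h') * hs) • y₀ := smul_smul _ _ _
      rw [e, e0, zero_smul]
      exact Submodule.zero_mem _
    obtain ⟨h'', hh'', he''⟩ := hpure h' hh'
    have hzero : ∀ x : M, ((1 : R) - h'') • x = 0 := by
      intro x
      obtain ⟨j, hj, hjx⟩ := COR (1 - h') hT1h' x
      have hux : (1 - j) • x = h' • x := by
        rw [sub_smul, one_smul, ← hjx, sub_smul, one_smul, sub_sub_cancel]
      have hu : IsUnit ((1 : R) - j) :=
        Ideal.isUnit_of_sub_one_mem_jacobson_bot _ (by simpa using Submodule.neg_mem _ hj)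
      obtain ⟨v, hv⟩ := isUnit_iff_exists_inv.mp hu
      have h0 : (((1 : R) - h'') * (1 - j)) • x = 0 := by
        rw [mul_smul, hux, ← mul_smul]
        have e : ((1 : R) - h'') * h' = 0 := by linear_combination -he''
        rw [e, zero_smul]
      have hsc : (1 : R) - h'' = v * (((1 : R) - h'') * (1 - j)) := by
        linear_combination -((1:R) - h'') * hv
      calc ((1 : R) - h'') • x = (v * (((1 : R) - h'') * (1 - j))) • x := by rw [← hsc]
        _ = v • ((((1 : R) - h'') * (1 - j)) • x) := mul_smul _ _ _
        _ = 0 := by rw [h0, smul_zero]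
    have h1 : (1 : R) - h'' = 0 := hfaithful _ hzero
    have e : h'' = 1 := (sub_eq_zero.mp h1).symm
    rw [← e]
    exact hh''
  -- uniform cyclic witnesses exist at every maximal ideal
  have D2' : ∀ m : Ideal R, m.IsMaximal →
      ∃ z : M, ∃ q ∈ m, ∀ y : M, ∃ s : R, (1 - q) • y = s • z := by
    intro m hm
    by_cases hall : ∀ z : M, (Submodule.span R {z}).colon ⊤ ≤ m
    · exfalso
      have hθm : (⨆ x : M, (Submodule.span R {x}).colon ⊤) ≤ m := iSup_le hall
      exact hm.ne_top ((Ideal.eq_top_iff_one m).mpr (hθm hone))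
    · push_neg at hall
      obtain ⟨z, hz⟩ := hall
      obtain ⟨q, hq, huni⟩ := UNI m hm z hz
      exact ⟨z, q, hq, huni⟩
  -- the jacobson colon is contained in the Jacobson radical
  have HH : jacobsonColon R M ≤ (⊥ : Ideal R).jacobson := by
    intro c hc
    rw [Ideal.mem_jacobson_bot]
    intro y
    by_contra hu
    have hspan_ne : Ideal.span {c * y + 1} ≠ ⊤ := by
      rwa [Ne, Ideal.span_singleton_eq_top]
    obtain ⟨m, hm, hum⟩ := Ideal.exists_le_maximal _ hspan_ne
    have hu_m : c * y + 1 ∈ m := hum (Ideal.mem_span_singleton_self _)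
    obtain ⟨z, q, hq, huni⟩ := D2' m hm
    have hJacm : (⊥ : Ideal R).jacobson ≤ m := sInf_le ⟨bot_le, hm⟩
    have hc' : (-(c * y)) ∈ jacobsonColon R M :=
      Submodule.neg_mem _ (Ideal.mul_mem_right y _ hc)
    have hcz : (-(c * y)) • z ∈ (⊥ : Ideal R).jacobson • (⊤ : Submodule R M) := hTmem _ hc' z
    obtain ⟨j₁, hj₁, hj₁e⟩ := EXT _ z (1 - q) huni _ hcz
    have hdz : ((1 - q) * (-(c * y)) - j₁) • z = 0 := by
      rw [sub_smul, mul_smul, hj₁e, sub_self]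
    have hd : ((1 - q) * (-(c * y)) - j₁) * (1 - q) = 0 := SPREAD z (1 - q) _ huni hdz
    have heq : (1 - q) * (1 - q) = ((1 - q) * (1 - q)) * (c * y + 1) + (1 - q) * j₁ := by
      linear_combination hd
    have h2 : (1 - q) * (1 - q) ∈ m := by
      rw [heq]
      exact m.add_mem (Ideal.mul_mem_left _ _ hu_m) (Ideal.mul_mem_left _ _ (hJacm hj₁))
    have h1qm : (1 - q) ∈ m := by
      rcases hm.isPrime.mem_or_mem h2 with h | h <;> exact h
    exact hm.ne_top ((Ideal.eq_top_iff_one m).mpr (by simpa using m.add_mem hq h1qm))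
  by_cases hNtop : N = ⊤
  · subst hNtop
    left
    refine ⟨hItop, ?_⟩
    intro a b hab haJ
    have haT : a ∉ jacobsonColon R M := fun h => haJ (HH h)
    have hbM : ∀ x : M, b • x ∈ I • (⊤ : Submodule R M) := by
      intro x
      apply hP a (b • x) ?_ haT
      have e : a • (b • x) = (a * b) • x := (mul_smul a b x).symm
      rw [e]
      exact Submodule.smul_mem_smul hab Submodule.mem_top
    by_contra hbI
    have hGtop : I.colon (Submodule.span R {b}) ≠ ⊤ := by
      intro h
      apply hbI
      have h1 : (1 : R) ∈ I.colon (Submodule.span R {b}) := by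
        rw [h]; exact Submodule.mem_top
      simpa using Submodule.mem_colon.mp h1 b (Submodule.mem_span_singleton_self b)
    obtain ⟨m, hm, hGm⟩ := Ideal.exists_le_maximal _ hGtop
    obtain ⟨z, q, hq, huni⟩ := D2' m hm
    obtain ⟨g₀, hg₀, hg₀e⟩ := EXT I z (1 - q) huni _ (hbM z)
    have hdz : ((1 - q) * b - g₀) • z = 0 := by
      rw [sub_smul, mul_smul, hg₀e, sub_self]
    have hd : ((1 - q) * b - g₀) * (1 - q) = 0 := SPREAD z (1 - q) _ huni hdz
    have hIb : ((1 - q) * (1 - q)) * b ∈ I := by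
      have e : ((1 - q) * (1 - q)) * b = (1 - q) * g₀ := by linear_combination hd
      rw [e]
      exact Ideal.mul_mem_left _ _ hg₀
    have hmem : (1 - q) * (1 - q) ∈ I.colon (Submodule.span R {b}) := by
      rw [Submodule.mem_colon]
      intro p hp
      obtain ⟨t, ht⟩ := Submodule.mem_span_singleton.mp hp
      rw [← ht, smul_smul]
      show ((1 - q) * (1 - q) * t) * b ∈ I
      have e : ((1 - q) * (1 - q) * t) * b = t * ((1 - q) * (1 - q) * b) := by ring
      rw [e]
      exact Ideal.mul_mem_left _ _ hIb
    have h2m := hGm hmem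
    have h1qm : (1 - q) ∈ m := by
      rcases hm.isPrime.mem_or_mem h2m with h | h <;> exact h
    exact hm.ne_top ((Ideal.eq_top_iff_one m).mpr (by simpa using m.add_mem hq h1qm))
  · right
    refine ⟨hNtop, ?_⟩
    intro r x hrx hrT
    apply L2M x N
    intro i hi
    apply hP r (i • x) ?_ hrT
    rw [smul_comm]
    exact Submodule.smul_mem_smul hi hrx
end

section
/- Every quasi J-submodule of a finitely generated faithful multiplication R-module M is small in M; that is, if N is a quasi J-submodule of M and K is a submodule of M with N + K = M, then K = M. -/
open Submodule Pointwise

theorem stmt18 {R M : Type*} [CommRing R] [AddCommGroup M] [Module R M]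
    [Module.Finite R M]
    (hfaithful : ∀ r : R, (∀ m : M, r • m = 0) → r = 0)
    (hmult : ∀ N : Submodule R M, N = N.colon ⊤ • (⊤ : Submodule R M))
    (N : Submodule R M) (hN : IsQuasiJSubmodule N) :
    ∀ K : Submodule R M, N ⊔ K = ⊤ → K = ⊤ := by
  intro K hK
  have hfg : (⊤ : Submodule R M).FG := Module.Finite.fg_top
  set I := N.colon ⊤ with hI
  set Jc := K.colon ⊤ with hJc
  -- Step 1 : 1 ∈ I ⊔ Jc
  have hsup : (⊤ : Submodule R M) ≤ (I ⊔ Jc) • ⊤ := by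
    rw [Submodule.sup_smul, ← hmult N, ← hmult K, hK]
  obtain ⟨r, hr1, hr2⟩ :=
    Submodule.exists_sub_one_mem_and_smul_eq_zero_of_fg_of_le_smul (I ⊔ Jc) ⊤ hfg hsup
  have hr0 : r = 0 := hfaithful r fun m => hr2 m trivial
  have hone : (1 : R) ∈ I ⊔ Jc := by
    have : -(1 : R) ∈ I ⊔ Jc := by simpa [hr0] using hr1
    simpa using neg_mem this
  obtain ⟨a, ha, b, hb, hab⟩ := Submodule.mem_sup.mp hone
  by_cases haj : a ∈ jacobsonColon R M
  · -- a ∈ (J(R)M : M) : use Nakayama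
    have hle : (⊤ : Submodule R M) ≤ K ⊔ ((⊥ : Ideal R).jacobson • ⊤) := by
      intro m _
      have hm : m = a • m + b • m := by
        rw [← add_smul, hab, one_smul]
      rw [hm]
      exact Submodule.add_mem _
        (Submodule.mem_sup_right ((Submodule.mem_colon.mp haj) m trivial))
        (Submodule.mem_sup_left ((Submodule.mem_colon.mp hb) m trivial))
    have := Submodule.le_of_le_smul_of_le_jacobson_bot hfg le_rfl hle
    exact top_le_iff.mp this
  · -- a ∉ (J(R)M : M) : Mrad N = ⊤, contradict via a prime submodule
    exfalso
    have hIne : I ≠ ⊤ := by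
      intro h
      apply hN.1
      rw [hmult N, ← hI, h, top_smul]
    obtain ⟨p, hpmax, hIp⟩ := Ideal.exists_le_maximal I hIne
    set P : Submodule R M := p • ⊤ with hP
    have hPne : P ≠ ⊤ := by
      intro h
      obtain ⟨s, hs1, hs2⟩ :=
        Submodule.exists_sub_one_mem_and_smul_eq_zero_of_fg_of_le_smul p ⊤ hfg h.ge
      have : s = 0 := hfaithful s fun m => hs2 m trivial
      apply hpmax.ne_top
      rw [Ideal.eq_top_iff_one]
      simpa [this] using neg_mem hs1
    have hPprime : IsPrimeSubmodule P := by
      refine ⟨hPne, fun r m hrm => ?_⟩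
      by_cases hrp : r ∈ p
      · right
        exact Submodule.mem_colon.mpr fun x _ => Submodule.smul_mem_smul hrp trivial
      · left
        obtain ⟨s, i, hi, hsi⟩ := hpmax.exists_inv hrp
        have : m = s • (r • m) + i • m := by
          rw [smul_smul, ← add_smul, hsi, one_smul]
        rw [this]
        exact Submodule.add_mem _ (Submodule.smul_mem _ s hrm)
          (Submodule.smul_mem_smul hi trivial)
    have hNP : N ≤ P := by
      rw [hmult N, ← hI]
      exact Submodule.smul_mono_left hIp
    -- every element is in Mrad N
    obtain ⟨m, hm⟩ : ∃ m : M, m ∉ P := by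
      by_contra h
      push_neg at h
      exact hPne (top_le_iff.mp fun x _ => h x)
    have hmem : m ∈ Mrad N :=
      hN.2 a m ((Submodule.mem_colon.mp ha) m trivial) haj
    have hPmem : P ∈ {Q : Submodule R M | IsPrimeSubmodule Q ∧ N ≤ Q} := ⟨hPprime, hNP⟩
    exact hm (sInf_le hPmem hmem)
end

section
/- Let R be a commutative ring, M an R-module, and let R(+)M denote the idealization of M, with multiplication (r₁, m₁)(r₂, m₂) = (r₁r₂, r₁m₂ + r₂m₁). Let I be an ideal of R and N a submodule of M with IM ⊆ N, so that I(+)N is an ideal of R(+)M. Then I(+)N is a quasi J-ideal of R(+)M if and only if I is a quasi J-ideal of R. -/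
lemma tsze_mem_jacobson_bot {R M : Type*} [CommRing R] [AddCommGroup M] [Module R M]
    [Module Rᵐᵒᵖ M] [IsCentralScalar R M] (x : TrivSqZeroExt R M) :
    x ∈ (⊥ : Ideal (TrivSqZeroExt R M)).jacobson ↔ x.fst ∈ (⊥ : Ideal R).jacobson := by
  rw [Ideal.mem_jacobson_bot, Ideal.mem_jacobson_bot]
  constructor
  · intro h b
    have := h (TrivSqZeroExt.inl b)
    rw [TrivSqZeroExt.isUnit_iff_isUnit_fst] at this
    simpa using this
  · intro h y
    rw [TrivSqZeroExt.isUnit_iff_isUnit_fst]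
    simpa using h y.fst

theorem stmt19 {R M : Type*} [CommRing R] [AddCommGroup M] [Module R M]
    [Module Rᵐᵒᵖ M] [IsCentralScalar R M]
    (I : Ideal R) (N : Submodule R M)
    (hIN : ∀ a ∈ I, ∀ m : M, a • m ∈ N)
    (K : Ideal (TrivSqZeroExt R M))
    (hK : ∀ x : TrivSqZeroExt R M, x ∈ K ↔ x.fst ∈ I ∧ x.snd ∈ N) :
    IsQuasiJIdeal K ↔ IsQuasiJIdeal I := by
  -- radical membership
  have hrad : ∀ x : TrivSqZeroExt R M, x ∈ K.radical ↔ x.fst ∈ I.radical := by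
    intro x
    constructor
    · rintro ⟨n, hn⟩
      exact ⟨n, ((hK _).1 hn).1⟩
    · rintro ⟨n, hn⟩
      refine ⟨n + 1, (hK _).2 ⟨?_, ?_⟩⟩
      · rw [TrivSqZeroExt.fst_pow, pow_succ]
        exact I.mul_mem_right _ hn
      · rw [TrivSqZeroExt.snd_pow]
        simp only [Nat.pred_succ]
        exact nsmul_mem (hIN _ hn _) _
  have hne : K ≠ ⊤ ↔ I ≠ ⊤ := by
    simp only [Ideal.ne_top_iff_one, hK]
    simp
  have hradne : K.radical ≠ ⊤ ↔ I.radical ≠ ⊤ := by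
    simp only [Ideal.ne_top_iff_one, hrad]
    simp
  constructor
  · rintro ⟨hKt, hKr, hKJ⟩
    refine ⟨hne.1 hKt, hradne.1 hKr, fun a b hab ha => ?_⟩
    have : (TrivSqZeroExt.inl a : TrivSqZeroExt R M) * TrivSqZeroExt.inl b ∈ K.radical := by
      rw [hrad]; simpa using hab
    have := hKJ _ _ this (by rw [tsze_mem_jacobson_bot]; simpa using ha)
    rw [hrad] at this
    simpa using this
  · rintro ⟨hIt, hIr, hIJ⟩
    refine ⟨hne.2 hIt, hradne.2 hIr, fun x y hxy hx => ?_⟩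
    rw [hrad] at hxy ⊢
    rw [tsze_mem_jacobson_bot] at hx
    exact hIJ _ _ (by simpa using hxy) hx
end
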